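/- arXiv:2511.02033 — 5 statements merged into one kernel-verified Lean document; each statement's English description precedes it below -/
import Mathlib

section
/- Let τ > 0 and let ξ be a real random variable with E ξ = 0 and Var ξ = σ² whose distribution F belongs to the class A₁(τ). Then for all real t with |t|τ ≤ 1, the characteristic functions satisfy |F̂(t) − Φ̂(t)| ≤ (τ/6)·σ²·|t|³·exp(−σ²t²/3), where F̂(t) = E exp(itξ) and Φ̂(t) = exp(−σ²t²/2) is the characteristic function of the Gaussian law with mean 0 and variance σ². -/
open MeasureTheory ProbabilityTheory

noncomputable section

/-- `φ` is the cumulant generating function (analytic logarithm of the Laplace transform,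
normalized by `φ 0 = 0`) of `μ` on the disc `{z : ‖z‖ * τ < 1}`, with third derivative
bounded by `τ · Var μ`.  This is the defining property of the class `A₁(τ)`. -/
def IsCGF (φ : ℂ → ℂ) (τ : ℝ) (μ : Measure ℝ) : Prop :=
  φ 0 = 0 ∧ ∀ z : ℂ, ‖z‖ * τ < 1 →
    Integrable (fun x : ℝ => Complex.exp (z * x)) μ ∧
    Complex.exp (φ z) = ∫ x : ℝ, Complex.exp (z * x) ∂μ ∧
    AnalyticAt ℂ φ z ∧
    ‖iteratedDeriv 3 φ z‖ ≤ τ * variance id μ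

/-- The class `A₁(τ)` of distributions on `ℝ`. -/
def MemA1 (τ : ℝ) (μ : Measure ℝ) : Prop := ∃ φ : ℂ → ℂ, IsCGF φ τ μ

/-- `π` is a coupling of `F` and `G`. -/
def IsCoupling (π : Measure (ℝ × ℝ)) (F G : Measure ℝ) : Prop :=
  π.map Prod.fst = F ∧ π.map Prod.snd = G


section AuxiliaryLemmas

lemma norm_cexp_sub_one_le (w : ℂ) : ‖Complex.exp w - 1‖ ≤ ‖w‖ * Real.exp ‖w‖ := by
  have hd : ∀ s ∈ Set.uIcc (0:ℝ) 1,
      HasDerivAt (fun u : ℝ => Complex.exp ((u:ℂ) * w)) (Complex.exp ((s:ℂ) * w) * (1 * w)) s := by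
    intro s _
    exact (((hasDerivAt_id ((s:ℝ):ℂ)).mul_const w).cexp).comp_ofReal
  have hint : IntervalIntegrable (fun s : ℝ => Complex.exp ((s:ℂ) * w) * (1 * w))
      MeasureTheory.volume 0 1 := by
    apply Continuous.intervalIntegrable
    fun_prop
  have heq := intervalIntegral.integral_eq_sub_of_hasDerivAt hd hint
  have heq' : Complex.exp w - 1 = ∫ s in (0:ℝ)..1, Complex.exp ((s:ℂ) * w) * (1 * w) := by
    rw [heq]; simp
  have hb : ∀ s ∈ Set.uIoc (0:ℝ) 1, ‖Complex.exp ((s:ℂ) * w) * (1 * w)‖ ≤ Real.exp ‖w‖ * ‖w‖ := by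
    intro s hs
    rw [Set.uIoc_of_le zero_le_one] at hs
    rw [norm_mul, one_mul, Complex.norm_exp]
    gcongr
    calc ((s:ℂ) * w).re ≤ ‖(s:ℂ) * w‖ := Complex.re_le_norm _
      _ = s * ‖w‖ := by
          rw [norm_mul, Complex.norm_real, Real.norm_eq_abs, abs_of_nonneg hs.1.le]
      _ ≤ 1 * ‖w‖ := by gcongr; exact hs.2
      _ = ‖w‖ := one_mul _
  have h := intervalIntegral.norm_integral_le_of_norm_le_const hb
  rw [← heq'] at h
  simpa [mul_comm] using h

lemma taylor_third (f f1 f2 f3 : ℝ → ℂ) (t C : ℝ) (ht : 0 ≤ t) (hC : 0 ≤ C)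
    (hd0 : ∀ s ∈ Set.Icc 0 t, HasDerivAt f (f1 s) s)
    (hd1 : ∀ s ∈ Set.Icc 0 t, HasDerivAt f1 (f2 s) s)
    (hd2 : ∀ s ∈ Set.Icc 0 t, HasDerivAt f2 (f3 s) s)
    (hcont : ContinuousOn f3 (Set.Icc 0 t))
    (h0 : f 0 = 0) (h10 : f1 0 = 0) (h20 : f2 0 = 0)
    (hb : ∀ s ∈ Set.Icc 0 t, ‖f3 s‖ ≤ C) :
    ‖f t‖ ≤ C * t ^ 3 / 6 := by
  have hsub : ∀ s ∈ Set.Icc (0:ℝ) t, Set.uIcc (0:ℝ) s ⊆ Set.Icc 0 t := by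
    intro s hs
    rw [Set.uIcc_of_le hs.1]
    exact Set.Icc_subset_Icc le_rfl hs.2
  have hc2 : ContinuousOn f2 (Set.Icc 0 t) := fun s hs =>
    (hd2 s hs).continuousAt.continuousWithinAt
  have hc1 : ContinuousOn f1 (Set.Icc 0 t) := fun s hs =>
    (hd1 s hs).continuousAt.continuousWithinAt
  -- step 2 : ‖f2 s‖ ≤ C * s
  have hstep2 : ∀ s ∈ Set.Icc (0:ℝ) t, ‖f2 s‖ ≤ C * s := by
    intro s hs
    have heq := intervalIntegral.integral_eq_sub_of_hasDerivAt
      (fun u hu => hd2 u (hsub s hs hu))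
      ((hcont.mono (hsub s hs)).intervalIntegrable)
    rw [h20, sub_zero] at heq
    have hbnd : ∀ u ∈ Set.uIoc (0:ℝ) s, ‖f3 u‖ ≤ C := by
      intro u hu
      rw [Set.uIoc_of_le hs.1] at hu
      exact hb u ⟨hu.1.le, hu.2.trans hs.2⟩
    have h := intervalIntegral.norm_integral_le_of_norm_le_const hbnd
    rw [heq] at h
    simpa [abs_of_nonneg hs.1] using h
  -- step 1 : ‖f1 s‖ ≤ C * s^2 / 2
  have hstep1 : ∀ s ∈ Set.Icc (0:ℝ) t, ‖f1 s‖ ≤ C * s ^ 2 / 2 := by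
    intro s hs
    have heq := intervalIntegral.integral_eq_sub_of_hasDerivAt
      (fun u hu => hd1 u (hsub s hs hu))
      ((hc2.mono (hsub s hs)).intervalIntegrable)
    rw [h10, sub_zero] at heq
    have hbnd : ∀ᵐ u ∂(MeasureTheory.volume.restrict (Set.uIoc (0:ℝ) s)), ‖f2 u‖ ≤ C * u := by
      rw [ae_restrict_iff' measurableSet_uIoc]
      filter_upwards with u hu
      rw [Set.uIoc_of_le hs.1] at hu
      exact hstep2 u ⟨hu.1.le, hu.2.trans hs.2⟩
    have h := intervalIntegral.norm_integral_le_abs_of_norm_le hbnd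
      ((continuous_const.mul continuous_id).intervalIntegrable _ _)
    rw [heq] at h
    have hval : (∫ u in (0:ℝ)..s, C * u) = C * s ^ 2 / 2 := by
      rw [intervalIntegral.integral_const_mul, integral_id]
      ring
    rw [hval] at h
    refine h.trans (le_of_eq (abs_of_nonneg ?_))
    positivity
  -- step 0
  have heq := intervalIntegral.integral_eq_sub_of_hasDerivAt
    (fun u hu => hd0 u (hsub t ⟨ht, le_rfl⟩ hu))
    ((hc1.mono (hsub t ⟨ht, le_rfl⟩)).intervalIntegrable)
  rw [h0, sub_zero] at heq
  have hbnd : ∀ᵐ u ∂(MeasureTheory.volume.restrict (Set.uIoc (0:ℝ) t)), ‖f1 u‖ ≤ C * u ^ 2 / 2 := by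
    rw [ae_restrict_iff' measurableSet_uIoc]
    filter_upwards with u hu
    rw [Set.uIoc_of_le ht] at hu
    exact hstep1 u ⟨hu.1.le, hu.2⟩
  have h := intervalIntegral.norm_integral_le_abs_of_norm_le hbnd
    (by apply Continuous.intervalIntegrable; fun_prop)
  rw [heq] at h
  have hval : (∫ u in (0:ℝ)..t, C * u ^ 2 / 2) = C * t ^ 3 / 6 := by
    have : (∫ u in (0:ℝ)..t, C * u ^ 2 / 2) = C / 2 * ∫ u in (0:ℝ)..t, u ^ 2 := by
      rw [← intervalIntegral.integral_const_mul]
      congr 1; ext u; ring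
    rw [this, integral_pow]
    ring
  rw [hval] at h
  refine h.trans (le_of_eq (abs_of_nonneg ?_))
  positivity

variable {τ : ℝ} {F : Measure ℝ} [IsProbabilityMeasure F] {φ : ℂ → ℂ}

lemma integrable_exp_real (hτ : 0 < τ) (hφ : IsCGF φ τ F) {c : ℝ} (hc : |c| * τ < 1) :
    Integrable (fun x => Real.exp (c * x)) F := by
  have h := ((hφ.2 (c : ℂ) (by simpa using hc)).1).norm
  simpa [← Complex.ofReal_mul, Complex.norm_exp] using h

lemma integrable_exp_abs (hτ : 0 < τ) (hφ : IsCGF φ τ F) {r : ℝ} (hr0 : 0 ≤ r)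
    (hr : r * τ < 1) : Integrable (fun x => Real.exp (r * |x|)) F := by
  have h1 : Integrable (fun x => Real.exp (r * x)) F :=
    integrable_exp_real hτ hφ (by rwa [abs_of_nonneg hr0])
  have h2 : Integrable (fun x => Real.exp (-r * x)) F :=
    integrable_exp_real hτ hφ (by rwa [abs_neg, abs_of_nonneg hr0])
  refine (h1.add h2).mono' (Continuous.aestronglyMeasurable (by continuity)) ?_
  filter_upwards with x
  rw [Real.norm_eq_abs, abs_of_nonneg (Real.exp_pos _).le]
  rcases le_total 0 x with hx | hx
  · rw [abs_of_nonneg hx]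
    exact le_add_of_nonneg_right (Real.exp_pos _).le
  · rw [abs_of_nonpos hx]
    simpa [neg_mul, mul_neg] using le_add_of_nonneg_left (a := Real.exp (r * x)) (Real.exp_pos _).le

lemma self_le_exp {y : ℝ} (hy : 0 ≤ y) : y ≤ Real.exp y :=
  le_trans (by linarith) (Real.add_one_le_exp y)

lemma integrable_abs_exp_abs (hτ : 0 < τ) (hφ : IsCGF φ τ F) {ρ : ℝ} (hρ : 0 < ρ)
    (hr : 3 * ρ * τ < 1) (n : ℕ) (hn : n ≤ 2) :
    Integrable (fun x => |x| ^ n * Real.exp (2 * ρ * |x|)) F := by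
  have hbase : Integrable (fun x => Real.exp (3 * ρ * |x|)) F :=
    integrable_exp_abs hτ hφ (by positivity) hr
  refine ((hbase.const_mul ((2 / ρ) ^ n)).mono' (Continuous.aestronglyMeasurable (by continuity)) ?_)
  filter_upwards with x
  rw [Real.norm_eq_abs, abs_of_nonneg (by positivity)]
  have key : |x| ^ n ≤ (2 / ρ) ^ n * Real.exp (ρ * |x|) := by
    have h1 : ρ / 2 * |x| ≤ Real.exp (ρ / 2 * |x|) := self_le_exp (by positivity)
    have h2 : (ρ / 2 * |x|) ^ n ≤ Real.exp (ρ / 2 * |x|) ^ n := by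
      exact pow_le_pow_left₀ (by positivity) h1 n
    have h3 : Real.exp (ρ / 2 * |x|) ^ n ≤ Real.exp (ρ * |x|) := by
      rw [← Real.exp_nat_mul]
      apply Real.exp_le_exp.2
      have h4 : (n : ℝ) ≤ 2 := by exact_mod_cast hn
      nlinarith [abs_nonneg x, hρ.le, mul_nonneg (mul_nonneg hρ.le (abs_nonneg x)) (sub_nonneg.2 h4)]
    calc |x| ^ n = (2 / ρ) ^ n * (ρ / 2 * |x|) ^ n := by
          rw [← mul_pow]; congr 1; field_simp
      _ ≤ (2 / ρ) ^ n * Real.exp (ρ * |x|) := by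
          exact mul_le_mul_of_nonneg_left (h2.trans h3) (by positivity)
  calc |x| ^ n * Real.exp (2 * ρ * |x|)
      ≤ (2 / ρ) ^ n * Real.exp (ρ * |x|) * Real.exp (2 * ρ * |x|) :=
        mul_le_mul_of_nonneg_right key (Real.exp_pos _).le
    _ = (2 / ρ) ^ n * Real.exp (3 * ρ * |x|) := by
        rw [mul_assoc, ← Real.exp_add]; congr 2; ring

lemma ball_lt (hτ : 0 < τ) {z : ℂ} (hz : ‖z‖ < 1 / (4 * τ)) : ‖z‖ * τ < 1 := by
  calc ‖z‖ * τ < 1 / (4 * τ) * τ := by exact mul_lt_mul_of_pos_right hz hτ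
    _ = 1 / 4 := by field_simp
    _ < 1 := by norm_num

lemma three_rho (hτ : 0 < τ) : 3 * (1 / (4 * τ)) * τ < 1 := by
  have : 3 * (1 / (4 * τ)) * τ = 3 / 4 := by field_simp
  rw [this]; norm_num

lemma norm_cexp_mul_le (z : ℂ) (x : ℝ) {r : ℝ} (hz : ‖z‖ ≤ r) :
    ‖Complex.exp (z * x)‖ ≤ Real.exp (r * |x|) := by
  rw [Complex.norm_exp]
  apply Real.exp_le_exp.2
  have : (z * x).re = z.re * x := by simp [Complex.mul_re]
  rw [this]
  calc z.re * x ≤ |z.re * x| := le_abs_self _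
    _ = |z.re| * |x| := abs_mul _ _
    _ ≤ ‖z‖ * |x| := by gcongr; exact Complex.abs_re_le_norm z
    _ ≤ r * |x| := by gcongr

lemma hasDerivAt_M (hτ : 0 < τ) (hφ : IsCGF φ τ F) {z₀ : ℂ} (hz : ‖z₀‖ < 1 / (4 * τ)) :
    HasDerivAt (fun z => ∫ x, Complex.exp (z * x) ∂F)
      (∫ x : ℝ, (x : ℂ) * Complex.exp (z₀ * x) ∂F) z₀ := by
  have hρ : (0:ℝ) < 1 / (4 * τ) := by positivity
  refine (hasDerivAt_integral_of_dominated_loc_of_deriv_le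
    (F' := fun z (x : ℝ) => (x : ℂ) * Complex.exp (z * x))
    (bound := fun x => |x| ^ 1 * Real.exp (2 * (1 / (4 * τ)) * |x|)) (Metric.ball_mem_nhds z₀ hρ) ?_ ?_ ?_ ?_ ?_ ?_).2
  · filter_upwards with z
    exact (Complex.continuous_exp.comp (continuous_const.mul Complex.continuous_ofReal)).aestronglyMeasurable
  · exact (hφ.2 z₀ (ball_lt hτ hz)).1
  · apply Continuous.aestronglyMeasurable
    exact Complex.continuous_ofReal.mul
      (Complex.continuous_exp.comp (continuous_const.mul Complex.continuous_ofReal))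
  · filter_upwards with x
    intro z hzb
    rw [norm_mul]
    have h1 : ‖((x:ℝ):ℂ)‖ = |x| := by simp
    rw [h1, pow_one]
    have hznorm : ‖z‖ ≤ 2 * (1 / (4 * τ)) := by
      have := mem_ball_iff_norm.1 hzb
      have h2 := norm_sub_norm_le z z₀
      linarith
    exact mul_le_mul_of_nonneg_left (norm_cexp_mul_le z x hznorm) (abs_nonneg x)
  · exact integrable_abs_exp_abs hτ hφ hρ (three_rho hτ) 1 (by norm_num)
  · filter_upwards with x
    intro z hzb
    have h := ((hasDerivAt_id z).mul_const ((x:ℝ):ℂ)).cexp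
    simpa [mul_comm] using h

lemma hasDerivAt_M1 (hτ : 0 < τ) (hφ : IsCGF φ τ F) {z₀ : ℂ} (hz : ‖z₀‖ < 1 / (4 * τ)) :
    HasDerivAt (fun z => ∫ x : ℝ, (x : ℂ) * Complex.exp (z * x) ∂F)
      (∫ x : ℝ, (x : ℂ) ^ 2 * Complex.exp (z₀ * x) ∂F) z₀ := by
  have hρ : (0:ℝ) < 1 / (4 * τ) := by positivity
  refine (hasDerivAt_integral_of_dominated_loc_of_deriv_le
    (F' := fun z (x : ℝ) => (x : ℂ) ^ 2 * Complex.exp (z * x))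
    (bound := fun x => |x| ^ 2 * Real.exp (2 * (1 / (4 * τ)) * |x|)) (Metric.ball_mem_nhds z₀ hρ) ?_ ?_ ?_ ?_ ?_ ?_).2
  · filter_upwards with z
    apply Continuous.aestronglyMeasurable
    exact Complex.continuous_ofReal.mul
      (Complex.continuous_exp.comp (continuous_const.mul Complex.continuous_ofReal))
  · -- Integrable (fun x => x * exp (z₀ x))
    have hb := integrable_abs_exp_abs hτ hφ hρ (three_rho hτ) 1 (by norm_num)
    refine hb.mono' ?_ ?_
    · apply Continuous.aestronglyMeasurable
      exact Complex.continuous_ofReal.mul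
        (Complex.continuous_exp.comp (continuous_const.mul Complex.continuous_ofReal))
    · filter_upwards with x
      rw [norm_mul]
      have h1 : ‖((x:ℝ):ℂ)‖ = |x| := by simp
      rw [h1, pow_one]
      exact mul_le_mul_of_nonneg_left
        (norm_cexp_mul_le z₀ x (by linarith : ‖z₀‖ ≤ 2 * (1 / (4 * τ)))) (abs_nonneg x)
  · apply Continuous.aestronglyMeasurable
    exact (Complex.continuous_ofReal.pow 2).mul
      (Complex.continuous_exp.comp (continuous_const.mul Complex.continuous_ofReal))
  · filter_upwards with x
    intro z hzb
    rw [norm_mul]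
    have h1 : ‖((x:ℝ):ℂ) ^ 2‖ = |x| ^ 2 := by simp [abs_nonneg]
    rw [h1]
    have hznorm : ‖z‖ ≤ 2 * (1 / (4 * τ)) := by
      have := mem_ball_iff_norm.1 hzb
      have h2 := norm_sub_norm_le z z₀
      linarith
    exact mul_le_mul_of_nonneg_left (norm_cexp_mul_le z x hznorm) (by positivity)
  · exact integrable_abs_exp_abs hτ hφ hρ (three_rho hτ) 2 (by norm_num)
  · filter_upwards with x
    intro z hzb
    have h := (((hasDerivAt_id z).mul_const ((x:ℝ):ℂ)).cexp).const_mul ((x:ℝ):ℂ)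
    convert h using 1
    · rfl
    · rfl
    simp only [id_eq]
    ring

lemma deriv_phi_M (hτ : 0 < τ) (hφ : IsCGF φ τ F) {z : ℂ} (hz : ‖z‖ < 1 / (4 * τ)) :
    (∫ x : ℝ, (x : ℂ) * Complex.exp (z * x) ∂F) = Complex.exp (φ z) * deriv φ z := by
  have hz' := ball_lt hτ hz
  have han := (hφ.2 z hz').2.2.1
  have h1 : HasDerivAt (fun w => Complex.exp (φ w)) (Complex.exp (φ z) * deriv φ z) z :=
    han.differentiableAt.hasDerivAt.cexp
  have hopen : IsOpen {w : ℂ | ‖w‖ * τ < 1} :=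
    isOpen_lt (continuous_norm.mul continuous_const) continuous_const
  have hev : (fun w => Complex.exp (φ w)) =ᶠ[nhds z] (fun w => ∫ x, Complex.exp (w * x) ∂F) := by
    filter_upwards [hopen.mem_nhds hz'] with w hw
    exact (hφ.2 w hw).2.1
  exact (hasDerivAt_M hτ hφ hz).unique (h1.congr_of_eventuallyEq hev.symm)

lemma zero_mem_ball (hτ : 0 < τ) : ‖(0:ℂ)‖ < 1 / (4 * τ) := by simp; positivity

lemma M_zero : (∫ x : ℝ, Complex.exp ((0:ℂ) * x) ∂F) = 1 := by simp

lemma M1_zero (hmean : (∫ x : ℝ, x ∂F) = 0) :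
    (∫ x : ℝ, (x : ℂ) * Complex.exp ((0:ℂ) * x) ∂F) = 0 := by
  simp only [zero_mul, Complex.exp_zero, mul_one]
  have h : ∫ x : ℝ, ((x : ℝ) : ℂ) ∂F = ((∫ x : ℝ, x ∂F : ℝ) : ℂ) := integral_ofReal
  rw [h, hmean, Complex.ofReal_zero]

lemma M2_zero : (∫ x : ℝ, (x : ℂ) ^ 2 * Complex.exp ((0:ℂ) * x) ∂F) = ((∫ x : ℝ, x ^ 2 ∂F : ℝ) : ℂ) := by
  simp only [zero_mul, Complex.exp_zero, mul_one, ← Complex.ofReal_pow]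
  exact integral_ofReal

lemma deriv_phi_zero (hτ : 0 < τ) (hφ : IsCGF φ τ F) (hmean : (∫ x : ℝ, x ∂F) = 0) :
    deriv φ 0 = 0 := by
  have h := deriv_phi_M hτ hφ (zero_mem_ball hτ)
  rw [M1_zero hmean, hφ.1, Complex.exp_zero, one_mul] at h
  exact h.symm

lemma deriv2_phi_zero (hτ : 0 < τ) (hφ : IsCGF φ τ F) (hmean : (∫ x : ℝ, x ∂F) = 0) :
    deriv (deriv φ) 0 = ((∫ x : ℝ, x ^ 2 ∂F : ℝ) : ℂ) := by
  have hev : deriv φ =ᶠ[nhds 0] fun z =>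
      (∫ x : ℝ, (x : ℂ) * Complex.exp (z * x) ∂F) *
        (∫ x : ℝ, Complex.exp (z * x) ∂F)⁻¹ := by
    filter_upwards [Metric.ball_mem_nhds (0:ℂ) (by positivity : (0:ℝ) < 1 / (4 * τ))] with z hz
    rw [mem_ball_zero_iff] at hz
    have hMeq := (hφ.2 z (ball_lt hτ hz)).2.1
    rw [deriv_phi_M hτ hφ hz, ← hMeq]
    field_simp
  rw [hev.deriv_eq]
  have h0 := zero_mem_ball hτ
  have hM := hasDerivAt_M hτ hφ h0
  have hM1 := hasDerivAt_M1 hτ hφ h0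
  have hMne : (∫ x : ℝ, Complex.exp ((0:ℂ) * x) ∂F) ≠ 0 := by
    rw [M_zero]; exact one_ne_zero
  have hinv := hM.inv hMne
  have hq := hM1.mul hinv
  rw [HasDerivAt.deriv (f := fun z => (∫ x : ℝ, (x : ℂ) * Complex.exp (z * x) ∂F) * (∫ x : ℝ, Complex.exp (z * x) ∂F)⁻¹) hq]
  rw [M_zero, M1_zero hmean, M2_zero]
  simp

lemma three_rho' (hτ : 0 < τ) : 3 * (1 / (4 * τ)) * τ < 1 := by
  have : 3 * (1 / (4 * τ)) * τ = 3 / 4 := by field_simp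
  rw [this]; norm_num

lemma integral_sq_eq_variance (hτ : 0 < τ) (hφ : IsCGF φ τ F)
    (hmean : (∫ x : ℝ, x ∂F) = 0) : (∫ x : ℝ, x ^ 2 ∂F) = variance id F := by
  have hρ : (0:ℝ) < 1 / (4 * τ) := by positivity
  have hint : Integrable (fun x : ℝ => x ^ 2) F := by
    refine (integrable_abs_exp_abs hτ hφ hρ (three_rho' hτ) 2 le_rfl).mono'
      (Continuous.aestronglyMeasurable (by continuity)) ?_
    filter_upwards with x
    rw [Real.norm_eq_abs, abs_of_nonneg (sq_nonneg x), ← sq_abs]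
    nlinarith [Real.one_le_exp (by positivity : (0:ℝ) ≤ 2 * (1 / (4 * τ)) * |x|), sq_nonneg |x|]
  have hmem : MemLp (id : ℝ → ℝ) 2 F := by
    rw [memLp_two_iff_integrable_sq aestronglyMeasurable_id]
    simpa [id] using hint
  have h := variance_eq_sub hmem
  have h2 : (∫ x : ℝ, (id ^ 2) x ∂F) = ∫ x : ℝ, x ^ 2 ∂F := by
    congr 1
  have h3 : (∫ x : ℝ, id x ∂F) = 0 := hmean
  rw [h2, h3] at h
  simp at h
  rw [h]

lemma comp_I {f : ℂ → ℂ} {f' : ℂ} {s : ℝ} (hf : HasDerivAt f f' ((s:ℂ) * Complex.I)) :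
    HasDerivAt (fun u : ℝ => f ((u:ℂ) * Complex.I)) (f' * Complex.I) s := by
  have h1 : HasDerivAt (fun z : ℂ => f (z * Complex.I)) (f' * (1 * Complex.I)) (s:ℂ) := by
    have := HasDerivAt.comp (s:ℂ) (h := fun z : ℂ => z * Complex.I)
      (by simpa using hf) ((hasDerivAt_id ((s:ℂ))).mul_const Complex.I)
    exact this
  simpa using h1.comp_ofReal

lemma key_interior (τ σ : ℝ) (hτ : 0 < τ) (F : Measure ℝ) [IsProbabilityMeasure F]
    (hmean : (∫ x : ℝ, x ∂F) = 0) (hvar : variance id F = σ ^ 2)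
    {φ : ℂ → ℂ} (hφ : IsCGF φ τ F)
    (t : ℝ) (ht0 : 0 ≤ t) (ht : t * τ < 1) :
    ‖(∫ x : ℝ, Complex.exp ((t : ℂ) * (x : ℂ) * Complex.I) ∂F) -
        (Real.exp (-(σ ^ 2 * t ^ 2) / 2) : ℂ)‖ ≤
      τ / 6 * σ ^ 2 * t ^ 3 * Real.exp (-(σ ^ 2 * t ^ 2) / 3) := by
  set V := σ ^ 2 with hVdef
  have hV : 0 ≤ V := sq_nonneg σ
  -- membership facts
  have hmem : ∀ s ∈ Set.Icc (0:ℝ) t, ‖(s:ℂ) * Complex.I‖ * τ < 1 := by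
    intro s hs
    have : ‖(s:ℂ) * Complex.I‖ = |s| := by simp
    rw [this, abs_of_nonneg hs.1]
    calc s * τ ≤ t * τ := by gcongr; exact hs.2
      _ < 1 := ht
  -- analyticity of φ and its derivatives on the disc
  have hAnOn : AnalyticOnNhd ℂ φ {z : ℂ | ‖z‖ * τ < 1} := fun z hz => (hφ.2 z hz).2.2.1
  have hAn1 : AnalyticOnNhd ℂ (deriv φ) {z : ℂ | ‖z‖ * τ < 1} := hAnOn.deriv
  have hAn2 : AnalyticOnNhd ℂ (deriv (deriv φ)) {z : ℂ | ‖z‖ * τ < 1} := hAn1.deriv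
  have hAn3 : AnalyticOnNhd ℂ (deriv (deriv (deriv φ))) {z : ℂ | ‖z‖ * τ < 1} := hAn2.deriv
  have hiter : iteratedDeriv 3 φ = deriv (deriv (deriv φ)) := by
    simp [iteratedDeriv_succ, iteratedDeriv_zero]
  -- the four functions
  set f : ℝ → ℂ := fun s => φ ((s:ℂ) * Complex.I) + ((V * s ^ 2 / 2 : ℝ) : ℂ) with hfdef
  set f1 : ℝ → ℂ := fun s => deriv φ ((s:ℂ) * Complex.I) * Complex.I + ((V * s : ℝ) : ℂ) with hf1def
  set f2 : ℝ → ℂ := fun s => -(deriv (deriv φ) ((s:ℂ) * Complex.I)) + ((V : ℝ) : ℂ) with hf2def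
  set f3 : ℝ → ℂ := fun s => -(deriv (deriv (deriv φ)) ((s:ℂ) * Complex.I) * Complex.I) with hf3def
  have hd0 : ∀ s ∈ Set.Icc (0:ℝ) t, HasDerivAt f (f1 s) s := by
    intro s hs
    have h1 := comp_I ((hAnOn _ (hmem s hs)).differentiableAt.hasDerivAt)
    have h2 : HasDerivAt (fun u : ℝ => V * u ^ 2 / 2) (V * s) s := by
      have := ((hasDerivAt_pow 2 s).const_mul V).div_const 2
      convert this using 1
      · rfl
      · rfl
      push_cast
      ring
    exact h1.add h2.ofReal_comp
  have hd1 : ∀ s ∈ Set.Icc (0:ℝ) t, HasDerivAt f1 (f2 s) s := by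
    intro s hs
    have h1 := (comp_I ((hAn1 _ (hmem s hs)).differentiableAt.hasDerivAt)).mul_const Complex.I
    have h2 : HasDerivAt (fun u : ℝ => V * u) V s := by
      simpa using (hasDerivAt_id s).const_mul V
    have h3 := h1.add h2.ofReal_comp
    convert h3 using 1
    · rfl
    · rfl
    rw [hf2def]
    simp only []
    rw [mul_assoc, Complex.I_mul_I, mul_neg_one]
  have hd2 : ∀ s ∈ Set.Icc (0:ℝ) t, HasDerivAt f2 (f3 s) s := by
    intro s hs
    have h1 := (comp_I ((hAn2 _ (hmem s hs)).differentiableAt.hasDerivAt)).neg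
    simpa [hf2def, hf3def] using h1.add_const ((V : ℝ) : ℂ)
  have hcont : ContinuousOn f3 (Set.Icc (0:ℝ) t) := by
    intro s hs
    apply ContinuousAt.continuousWithinAt
    have hf : ContinuousAt (fun u : ℝ => (u:ℂ) * Complex.I) s :=
      (Complex.continuous_ofReal.mul continuous_const).continuousAt
    have hc : ContinuousAt (fun u : ℝ => deriv (deriv (deriv φ)) ((u:ℂ) * Complex.I)) s := by
      show ContinuousAt (deriv (deriv (deriv φ)) ∘ fun u : ℝ => (u:ℂ) * Complex.I) s
      exact ContinuousAt.comp (f := fun u : ℝ => (u:ℂ) * Complex.I) (x := s)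
        ((hAn3 _ (hmem s hs)).continuousAt) hf
    exact (hc.mul continuousAt_const).neg
  have h0 : f 0 = 0 := by simp [hfdef, hφ.1]
  have h10 : f1 0 = 0 := by
    simp [hf1def, deriv_phi_zero hτ hφ hmean]
  have h20 : f2 0 = 0 := by
    have := deriv2_phi_zero hτ hφ hmean
    rw [integral_sq_eq_variance hτ hφ hmean, hvar] at this
    simp [hf2def, this]
  have hb : ∀ s ∈ Set.Icc (0:ℝ) t, ‖f3 s‖ ≤ τ * V := by
    intro s hs
    have := (hφ.2 _ (hmem s hs)).2.2.2
    rw [hiter] at this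
    rw [hvar] at this
    calc ‖f3 s‖ = ‖deriv (deriv (deriv φ)) ((s:ℂ) * Complex.I)‖ := by
          rw [hf3def]; simp
      _ ≤ τ * V := this
  -- Taylor estimate
  have htaylor : ‖f t‖ ≤ τ * V * t ^ 3 / 6 :=
    taylor_third f f1 f2 f3 t (τ * V) ht0 (by positivity) hd0 hd1 hd2 hcont h0 h10 h20 hb
  -- relate the characteristic function to φ
  have hFt : (∫ x : ℝ, Complex.exp ((t : ℂ) * (x : ℂ) * Complex.I) ∂F) =
      Complex.exp (φ ((t:ℂ) * Complex.I)) := by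
    have hmemt := hmem t ⟨ht0, le_rfl⟩
    rw [(hφ.2 _ hmemt).2.1]
    congr 1
    funext x
    congr 1
    ring
  rw [hFt]
  set w := f t with hwdef
  have hsplit : Complex.exp (φ ((t:ℂ) * Complex.I)) - (Real.exp (-(V * t ^ 2) / 2) : ℂ)
      = (Real.exp (-(V * t ^ 2) / 2) : ℂ) * (Complex.exp w - 1) := by
    rw [Complex.ofReal_exp]
    have hphi : φ ((t:ℂ) * Complex.I) = ((-(V * t ^ 2) / 2 : ℝ) : ℂ) + w := by
      rw [hwdef, hfdef]
      push_cast
      ring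
    rw [hphi, Complex.exp_add]
    ring
  rw [hsplit]
  set B := τ * V * t ^ 3 / 6 with hBdef
  have hB : 0 ≤ B := by positivity
  have hwB : ‖w‖ ≤ B := htaylor
  have hBle : B ≤ V * t ^ 2 / 6 := by
    rw [hBdef]
    rcases eq_or_lt_of_le ht0 with h | h
    · simp [← h]
    · have h1 : τ * t ≤ 1 := by nlinarith
      have h2 : (0:ℝ) ≤ V * t ^ 2 := by positivity
      nlinarith [mul_le_mul_of_nonneg_right h1 h2]
  calc ‖(Real.exp (-(V * t ^ 2) / 2) : ℂ) * (Complex.exp w - 1)‖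
      = Real.exp (-(V * t ^ 2) / 2) * ‖Complex.exp w - 1‖ := by
        rw [norm_mul]
        congr 1
        rw [Complex.norm_real, Real.norm_eq_abs, abs_of_pos (Real.exp_pos _)]
    _ ≤ Real.exp (-(V * t ^ 2) / 2) * (B * Real.exp B) := by
        gcongr
        calc ‖Complex.exp w - 1‖ ≤ ‖w‖ * Real.exp ‖w‖ := norm_cexp_sub_one_le w
          _ ≤ B * Real.exp B := by gcongr
    _ = B * Real.exp (-(V * t ^ 2) / 2 + B) := by rw [Real.exp_add]; ring
    _ ≤ B * Real.exp (-(V * t ^ 2) / 3) := by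
        gcongr
        linarith [hBle]
    _ = τ / 6 * V * t ^ 3 * Real.exp (-(V * t ^ 2) / 3) := by rw [hBdef]; ring

lemma key_closed (τ σ : ℝ) (hτ : 0 < τ) (F : Measure ℝ) [IsProbabilityMeasure F]
    (hmean : (∫ x : ℝ, x ∂F) = 0) (hvar : variance id F = σ ^ 2)
    {φ : ℂ → ℂ} (hφ : IsCGF φ τ F)
    (t : ℝ) (ht0 : 0 ≤ t) (ht : t * τ ≤ 1) :
    ‖(∫ x : ℝ, Complex.exp ((t : ℂ) * (x : ℂ) * Complex.I) ∂F) -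
        (Real.exp (-(σ ^ 2 * t ^ 2) / 2) : ℂ)‖ ≤
      τ / 6 * σ ^ 2 * t ^ 3 * Real.exp (-(σ ^ 2 * t ^ 2) / 3) := by
  rcases lt_or_eq_of_le ht with ht' | ht'
  · exact key_interior τ σ hτ F hmean hvar hφ t ht0 ht'
  -- boundary case : approximate from the inside
  set L : ℝ → ℝ := fun u => ‖(∫ x : ℝ, Complex.exp ((u : ℂ) * (x : ℂ) * Complex.I) ∂F) -
      (Real.exp (-(σ ^ 2 * u ^ 2) / 2) : ℂ)‖ with hLdef
  set R : ℝ → ℝ := fun u => τ / 6 * σ ^ 2 * u ^ 3 * Real.exp (-(σ ^ 2 * u ^ 2) / 3) with hRdef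
  have hInt : Continuous fun u : ℝ => ∫ x : ℝ, Complex.exp ((u : ℂ) * (x : ℂ) * Complex.I) ∂F := by
    apply continuous_of_dominated (bound := fun _ : ℝ => (1:ℝ))
    · intro u
      exact (Complex.continuous_exp.comp (by continuity)).aestronglyMeasurable
    · intro u
      filter_upwards with x
      rw [Complex.norm_exp]
      simp
    · exact integrable_const 1
    · filter_upwards with x
      exact Complex.continuous_exp.comp (by continuity)
  have hLcont : Continuous L := by
    apply Continuous.norm
    apply hInt.sub
    continuity
  have hRcont : Continuous R := by
    apply Continuous.mul
    · continuity
    · exact Real.continuous_exp.comp (by continuity)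
  -- t = 1/τ > 0 here
  have htpos : 0 < t := by
    by_contra hc
    push_neg at hc
    nlinarith
  set u : ℕ → ℝ := fun n => t * (1 - 1 / (n + 1)) with hudef
  have hu0 : ∀ n, 0 ≤ u n := by
    intro n
    apply mul_nonneg ht0
    have : 1 / ((n:ℝ) + 1) ≤ 1 := by
      rw [div_le_one (by positivity)]
      linarith [Nat.cast_nonneg (α := ℝ) n]
    linarith
  have hu1 : ∀ n, u n * τ < 1 := by
    intro n
    have h1 : u n < t := by
      rw [hudef]
      have : 0 < 1 / ((n:ℝ) + 1) := by positivity
      nlinarith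
    calc u n * τ < t * τ := by gcongr
      _ = 1 := ht'
  have hutend : Filter.Tendsto u Filter.atTop (nhds t) := by
    rw [hudef]
    have h1 : Filter.Tendsto (fun n : ℕ => 1 / ((n:ℝ) + 1)) Filter.atTop (nhds 0) :=
      tendsto_one_div_add_atTop_nhds_zero_nat
    have h2 : Filter.Tendsto (fun n : ℕ => 1 - 1 / ((n:ℝ) + 1)) Filter.atTop (nhds 1) := by
      simpa using (tendsto_const_nhds.sub h1)
    simpa using tendsto_const_nhds.mul h2
  have hL : Filter.Tendsto (fun n => L (u n)) Filter.atTop (nhds (L t)) :=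
    (hLcont.continuousAt.tendsto).comp hutend
  have hR : Filter.Tendsto (fun n => R (u n)) Filter.atTop (nhds (R t)) :=
    (hRcont.continuousAt.tendsto).comp hutend
  exact le_of_tendsto_of_tendsto' hL hR fun n =>
    key_interior τ σ hτ F hmean hvar hφ (u n) (hu0 n) (hu1 n)


end AuxiliaryLemmas

/-- Characteristic function estimate for the class `A₁(τ)`: for `|t| τ ≤ 1`,
`|F̂(t) - Φ̂(t)| ≤ (τ/6) σ² |t|³ exp(-σ² t²/3)`. -/
theorem charfun_estimate_A1
    (τ σ : ℝ) (hτ : 0 < τ) (F : Measure ℝ) [IsProbabilityMeasure F]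
    (hmean : (∫ x : ℝ, x ∂F) = 0) (hvar : variance id F = σ ^ 2) (hA : MemA1 τ F)
    (t : ℝ) (ht : |t| * τ ≤ 1) :
    ‖(∫ x : ℝ, Complex.exp ((t : ℂ) * (x : ℂ) * Complex.I) ∂F) -
        (Real.exp (-(σ ^ 2 * t ^ 2) / 2) : ℂ)‖ ≤
      τ / 6 * σ ^ 2 * |t| ^ 3 * Real.exp (-(σ ^ 2 * t ^ 2) / 3) := by
  obtain ⟨φ, hφ⟩ := hA
  rcases le_total 0 t with ht0 | ht0
  · rw [abs_of_nonneg ht0] at ht ⊢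
    exact key_closed τ σ hτ F hmean hvar hφ t ht0 ht
  · rw [abs_of_nonpos ht0] at ht ⊢
    set s := -t with hsdef
    have hs0 : 0 ≤ s := by rw [hsdef]; linarith
    have hconj : (∫ x : ℝ, Complex.exp ((t : ℂ) * (x : ℂ) * Complex.I) ∂F) =
        starRingEnd ℂ (∫ x : ℝ, Complex.exp ((s : ℂ) * (x : ℂ) * Complex.I) ∂F) := by
      rw [← integral_conj]
      congr 1
      funext x
      rw [← Complex.exp_conj]
      congr 1
      have hts : (t : ℂ) = -(s : ℂ) := by rw [hsdef]; push_cast; ring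
      rw [hts]
      simp [map_mul, Complex.conj_I]
    have hnorm : ∀ (A : ℂ) (r : ℝ), ‖starRingEnd ℂ A - (r:ℂ)‖ = ‖A - (r:ℂ)‖ := by
      intro A r
      calc ‖starRingEnd ℂ A - (r:ℂ)‖ = ‖starRingEnd ℂ (A - (r:ℂ))‖ := by
            rw [map_sub, Complex.conj_ofReal]
        _ = ‖A - (r:ℂ)‖ := by
            rw [Complex.norm_conj]
    have hts2 : σ ^ 2 * t ^ 2 = σ ^ 2 * s ^ 2 := by rw [hsdef]; ring
    rw [hconj, hnorm, hts2]
    exact key_closed τ σ hτ F hmean hvar hφ s hs0 ht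
end
end

section
/- Let τ > 0 and let ξ be a real random variable with E ξ = 0 and Var ξ = σ² whose distribution belongs to the class A₁(τ). Then for every x ≥ 0, P(ξ ≥ x) ≤ max{ exp(−x²/(4σ²)), exp(−x/(4τ)) }. -/
open MeasureTheory ProbabilityTheory

noncomputable section

lemma analyticAt_deriv' {f : ℂ → ℂ} {x : ℂ} (h : AnalyticAt ℂ f x) :
    AnalyticAt ℂ (deriv f) x := by
  rcases eventually_nhds_iff.1 h.eventually_analyticAt with ⟨t, ht, ht_open, hxt⟩
  exact AnalyticOnNhd.deriv (fun y hy => ht y hy) x hxt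

lemma bern_arith1 {τ σ x : ℝ} (hτ : 0 < τ) (hx : 0 < x) (hs2 : 0 < σ ^ 2)
    (hcase : τ * x ≤ σ ^ 2) :
    -(x / (2 * σ ^ 2)) * x + (σ ^ 2 * (x / (2 * σ ^ 2)) ^ 2 / 2
      + τ * σ ^ 2 * (x / (2 * σ ^ 2)) ^ 3 / 6) ≤ -(x ^ 2) / (4 * σ ^ 2) := by
  rw [← sub_nonneg]
  have key : -(x ^ 2) / (4 * σ ^ 2) - (-(x / (2 * σ ^ 2)) * x + (σ ^ 2 * (x / (2 * σ ^ 2)) ^ 2 / 2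
      + τ * σ ^ 2 * (x / (2 * σ ^ 2)) ^ 3 / 6))
      = (6 * σ ^ 2 * x ^ 2 - τ * x ^ 3) / (48 * σ ^ 4) := by
    have hσ : σ ≠ 0 := fun h => by simp [h] at hs2
    field_simp
    ring
  rw [key]
  apply div_nonneg _ (by positivity)
  nlinarith [sq_nonneg x, hx.le]

lemma bern_arith2 {τ σ x : ℝ} (hτ : 0 < τ) (hx : 0 ≤ x) (hcase : σ ^ 2 < τ * x) :
    -(1 / (2 * τ)) * x + (σ ^ 2 * (1 / (2 * τ)) ^ 2 / 2
      + τ * σ ^ 2 * (1 / (2 * τ)) ^ 3 / 6) ≤ -x / (4 * τ) := by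
  rw [← sub_nonneg]
  have key : -x / (4 * τ) - (-(1 / (2 * τ)) * x + (σ ^ 2 * (1 / (2 * τ)) ^ 2 / 2
      + τ * σ ^ 2 * (1 / (2 * τ)) ^ 3 / 6)) = (12 * τ * x - 7 * σ ^ 2) / (48 * τ ^ 2) := by
    field_simp
    ring
  rw [key]
  apply div_nonneg _ (by positivity)
  nlinarith [sq_nonneg σ]

lemma bern_aux1 {τ σ x : ℝ} (hτ : 0 < τ) (hx : 0 < x) (hs2 : 0 < σ ^ 2)
    (hcase : τ * x ≤ σ ^ 2) : x / (2 * σ ^ 2) * τ < 1 := by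
  rw [div_mul_eq_mul_div, div_lt_iff₀ (by positivity)]
  nlinarith

/-- Bernstein-type tail inequality for the class `A₁(τ)`:
`P(ξ ≥ x) ≤ max{exp(-x²/(4σ²)), exp(-x/(4τ))}` for `x ≥ 0`. -/
theorem bernstein_tail_A1
    (τ σ : ℝ) (hτ : 0 < τ) (F : Measure ℝ) [IsProbabilityMeasure F]
    (hmean : (∫ x : ℝ, x ∂F) = 0) (hvar : variance id F = σ ^ 2) (hA : MemA1 τ F)
    (x : ℝ) (hx : 0 ≤ x) :
    (F {y : ℝ | x ≤ y}).toReal ≤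
      max (Real.exp (-(x ^ 2) / (4 * σ ^ 2))) (Real.exp (-x / (4 * τ))) := by
  obtain ⟨φ, hφ0, hφ⟩ := hA
  set ρ : ℝ := 1 / (8 * τ) with hρdef
  have hρ : 0 < ρ := by positivity
  have hρτ : ρ * τ = 1 / 8 := by rw [hρdef]; field_simp
  have hmem : ∀ z : ℂ, ‖z‖ ≤ 3 * ρ → ‖z‖ * τ < 1 := by
    intro z hz
    have : ‖z‖ * τ ≤ 3 * ρ * τ := mul_le_mul_of_nonneg_right hz hτ.le
    nlinarith
  -- integrability of exponentials
  have int_exp : ∀ c : ℝ, |c| * τ < 1 → Integrable (fun a : ℝ => Real.exp (c * a)) F := by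
    intro c hc
    have h1 := (hφ (c : ℂ) (by simpa using hc)).1
    refine h1.norm.congr (Filter.Eventually.of_forall fun a => ?_)
    simp [Complex.norm_exp, Complex.mul_re]
  have int_exp_abs : ∀ c : ℝ, 0 ≤ c → c * τ < 1 →
      Integrable (fun a : ℝ => Real.exp (c * |a|)) F := by
    intro c hc0 hc
    have hpos := int_exp c (by rwa [abs_of_nonneg hc0])
    have hneg := int_exp (-c) (by rwa [abs_neg, abs_of_nonneg hc0])
    refine ((hpos.add hneg).mono'
      ((Real.continuous_exp.comp (continuous_const.mul continuous_abs)).aestronglyMeasurable)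
      (Filter.Eventually.of_forall fun a => ?_))
    have hpa := Real.exp_pos (c * a)
    have hna := Real.exp_pos (-(c * a))
    rw [Real.norm_eq_abs, Real.abs_exp]
    simp only [Pi.add_apply, neg_mul]
    rcases abs_cases a with ⟨h1, _⟩ | ⟨h1, _⟩ <;> rw [h1]
    · linarith
    · rw [mul_neg]; linarith
  have E3 : Integrable (fun a : ℝ => Real.exp (3 * ρ * |a|)) F :=
    int_exp_abs (3 * ρ) (by positivity) (by nlinarith)
  -- elementary bounds
  have ablem : ∀ a : ℝ, |a| ≤ (2 / ρ) * Real.exp (ρ / 2 * |a|) := by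
    intro a
    have h1 := Real.add_one_le_exp (ρ / 2 * |a|)
    have h3 : ρ / 2 * |a| ≤ Real.exp (ρ / 2 * |a|) := by linarith
    have h4 : (2 / ρ) * (ρ / 2 * |a|) ≤ (2 / ρ) * Real.exp (ρ / 2 * |a|) :=
      mul_le_mul_of_nonneg_left h3 (by positivity)
    have h5 : (2 / ρ) * (ρ / 2 * |a|) = |a| := by field_simp
    linarith
  have bound1 : ∀ a : ℝ, |a| * Real.exp (2 * ρ * |a|) ≤ (2 / ρ) * Real.exp (3 * ρ * |a|) := by
    intro a
    have h1 : |a| ≤ (2 / ρ) * Real.exp (ρ * |a|) := by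
      refine (ablem a).trans ?_
      have : Real.exp (ρ / 2 * |a|) ≤ Real.exp (ρ * |a|) := by
        apply Real.exp_le_exp.2; nlinarith [abs_nonneg a]
      exact mul_le_mul_of_nonneg_left this (by positivity)
    calc |a| * Real.exp (2 * ρ * |a|) ≤ (2 / ρ) * Real.exp (ρ * |a|) * Real.exp (2 * ρ * |a|) := by
          nlinarith [Real.exp_pos (2 * ρ * |a|)]
      _ = (2 / ρ) * Real.exp (3 * ρ * |a|) := by rw [mul_assoc, ← Real.exp_add]; ring_nf
  have bound2 : ∀ a : ℝ, a ^ 2 * Real.exp (2 * ρ * |a|) ≤ (4 / ρ ^ 2) * Real.exp (3 * ρ * |a|) := by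
    intro a
    have h1 : a ^ 2 ≤ (4 / ρ ^ 2) * Real.exp (ρ * |a|) := by
      have := ablem a
      have h2 : a ^ 2 = |a| * |a| := by rw [abs_mul_abs_self]; ring
      have h3 : |a| * |a| ≤ ((2 / ρ) * Real.exp (ρ / 2 * |a|)) * ((2 / ρ) * Real.exp (ρ / 2 * |a|)) :=
        mul_le_mul this this (abs_nonneg a) (by positivity)
      rw [h2]
      refine h3.trans_eq ?_
      rw [show (2 / ρ) * Real.exp (ρ / 2 * |a|) * ((2 / ρ) * Real.exp (ρ / 2 * |a|))
          = (4 / ρ ^ 2) * (Real.exp (ρ / 2 * |a|) * Real.exp (ρ / 2 * |a|)) by ring,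
        ← Real.exp_add]
      ring_nf
    calc a ^ 2 * Real.exp (2 * ρ * |a|)
        ≤ (4 / ρ ^ 2) * Real.exp (ρ * |a|) * Real.exp (2 * ρ * |a|) := by
          nlinarith [Real.exp_pos (2 * ρ * |a|)]
      _ = (4 / ρ ^ 2) * Real.exp (3 * ρ * |a|) := by rw [mul_assoc, ← Real.exp_add]; ring_nf
  have intsq : Integrable (fun a : ℝ => a ^ 2) F := by
    refine ((E3.const_mul (4 / ρ ^ 2)).mono'
      ((continuous_pow 2).aestronglyMeasurable) (Filter.Eventually.of_forall fun a => ?_))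
    have h0 : (1:ℝ) ≤ Real.exp (2 * ρ * |a|) := by
      rw [Real.one_le_exp_iff]; positivity
    have := bound2 a
    rw [Real.norm_eq_abs, abs_of_nonneg (sq_nonneg a)]
    nlinarith [sq_nonneg a]
  -- the Laplace transform and its derivatives
  set g1 : ℂ → ℂ := fun z => ∫ a : ℝ, Complex.exp (z * a) * a ∂F with hg1def
  set g2 : ℂ → ℂ := fun z => ∫ a : ℝ, Complex.exp (z * a) * a * a ∂F with hg2def
  have hball2 : ∀ z : ℂ, z ∈ Metric.ball (0:ℂ) ρ → ∀ w : ℂ, w ∈ Metric.ball z ρ →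
      ∀ a : ℝ, ‖Complex.exp (w * a)‖ ≤ Real.exp (2 * ρ * |a|) := by
    intro z hz w hw a
    rw [Complex.norm_exp]
    apply Real.exp_le_exp.2
    have h1 : (w * (a:ℂ)).re = w.re * a := by simp [Complex.mul_re]
    rw [h1]
    have h2 : ‖w‖ ≤ 2 * ρ := by
      have := norm_sub_norm_le w z
      have hz' : ‖z‖ < ρ := by simpa using hz
      have hw' : ‖w - z‖ < ρ := by simpa [dist_eq_norm] using hw
      linarith
    calc w.re * a ≤ |w.re * a| := le_abs_self _
      _ = |w.re| * |a| := abs_mul _ _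
      _ ≤ ‖w‖ * |a| := mul_le_mul_of_nonneg_right (Complex.abs_re_le_norm w) (abs_nonneg a)
      _ ≤ 2 * ρ * |a| := mul_le_mul_of_nonneg_right h2 (abs_nonneg a)
  have hg : ∀ z ∈ Metric.ball (0:ℂ) ρ,
      Integrable (fun a : ℝ => Complex.exp (z * a) * a) F ∧
      HasDerivAt (fun w : ℂ => ∫ a : ℝ, Complex.exp (w * a) ∂F) (g1 z) z := by
    intro z hz
    have hzρ : ‖z‖ < ρ := by simpa using hz
    have hz1 : ‖z‖ * τ < 1 := hmem z (by linarith)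
    refine hasDerivAt_integral_of_dominated_loc_of_deriv_le
      (F := fun w (a : ℝ) => Complex.exp (w * a))
      (F' := fun w (a : ℝ) => Complex.exp (w * a) * a)
      (bound := fun a => 2 / ρ * Real.exp (3 * ρ * |a|)) (Metric.ball_mem_nhds z hρ)
      (Filter.Eventually.of_forall fun w =>
        (Continuous.aestronglyMeasurable (by fun_prop)))
      (hφ z hz1).1
      (Continuous.aestronglyMeasurable (by fun_prop))
      (Filter.Eventually.of_forall fun a => fun w hw => ?_)
      (E3.const_mul (2 / ρ))
      (Filter.Eventually.of_forall fun a => fun w hw => ?_)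
    · rw [norm_mul]
      calc ‖Complex.exp (w * a)‖ * ‖(a:ℂ)‖ ≤ Real.exp (2 * ρ * |a|) * |a| := by
            refine mul_le_mul_of_nonneg_right (hball2 z hz w hw a) ?_ |>.trans ?_
            · exact norm_nonneg _
            · simp [Complex.norm_real]
        _ ≤ 2 / ρ * Real.exp (3 * ρ * |a|) := by rw [mul_comm]; exact bound1 a
    · simpa using (((hasDerivAt_id w).mul_const (a:ℂ)).cexp)
  have hg1 : ∀ z ∈ Metric.ball (0:ℂ) ρ,
      Integrable (fun a : ℝ => Complex.exp (z * a) * a * a) F ∧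
      HasDerivAt g1 (g2 z) z := by
    intro z hz
    refine hasDerivAt_integral_of_dominated_loc_of_deriv_le
      (F := fun w (a : ℝ) => Complex.exp (w * a) * a)
      (F' := fun w (a : ℝ) => Complex.exp (w * a) * a * a)
      (bound := fun a => 4 / ρ ^ 2 * Real.exp (3 * ρ * |a|)) (Metric.ball_mem_nhds z hρ)
      (Filter.Eventually.of_forall fun w =>
        (Continuous.aestronglyMeasurable (by fun_prop)))
      ((hg z hz).1)
      (Continuous.aestronglyMeasurable (by fun_prop))
      (Filter.Eventually.of_forall fun a => fun w hw => ?_)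
      (E3.const_mul (4 / ρ ^ 2))
      (Filter.Eventually.of_forall fun a => fun w hw => ?_)
    · rw [norm_mul, norm_mul]
      have ha : ‖(a:ℂ)‖ = |a| := by simp [Complex.norm_real]
      rw [ha]
      calc ‖Complex.exp (w * a)‖ * |a| * |a| ≤ Real.exp (2 * ρ * |a|) * |a| * |a| :=
            mul_le_mul_of_nonneg_right
              (mul_le_mul_of_nonneg_right (hball2 z hz w hw a) (abs_nonneg a)) (abs_nonneg a)
        _ = a ^ 2 * Real.exp (2 * ρ * |a|) := by
            rw [mul_assoc, abs_mul_abs_self, ← sq]; ring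
        _ ≤ 4 / ρ ^ 2 * Real.exp (3 * ρ * |a|) := bound2 a
    · simpa using ((((hasDerivAt_id w).mul_const (a:ℂ)).cexp).mul_const (a:ℂ))
  -- analyticity plumbing
  set φ1 : ℂ → ℂ := deriv φ with hφ1def
  set φ2 : ℂ → ℂ := deriv φ1 with hφ2def
  set φ3 : ℂ → ℂ := deriv φ2 with hφ3def
  have hφ_an : ∀ z : ℂ, ‖z‖ * τ < 1 → AnalyticAt ℂ φ z := fun z hz => (hφ z hz).2.2.1
  have an1 : ∀ z : ℂ, ‖z‖ * τ < 1 → AnalyticAt ℂ φ1 z := fun z hz =>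
    analyticAt_deriv' (hφ_an z hz)
  have an2 : ∀ z : ℂ, ‖z‖ * τ < 1 → AnalyticAt ℂ φ2 z := fun z hz =>
    analyticAt_deriv' (an1 z hz)
  have an3 : ∀ z : ℂ, ‖z‖ * τ < 1 → AnalyticAt ℂ φ3 z := fun z hz =>
    analyticAt_deriv' (an2 z hz)
  have h3eq : iteratedDeriv 3 φ = φ3 := by
    simp only [hφ3def, hφ2def, hφ1def]
    rw [show (3:ℕ) = 2 + 1 from rfl, iteratedDeriv_succ,
      show (2:ℕ) = 1 + 1 from rfl, iteratedDeriv_succ, iteratedDeriv_one]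
  have hd3 : ∀ z : ℂ, ‖z‖ * τ < 1 → ‖φ3 z‖ ≤ τ * σ ^ 2 := by
    intro z hz
    have := (hφ z hz).2.2.2
    rwa [h3eq, hvar] at this
  have hball_sub : Metric.ball (0:ℂ) ρ ⊆ {z : ℂ | ‖z‖ * τ < 1} := by
    intro z hz
    have : ‖z‖ < ρ := by simpa using hz
    exact hmem z (by linarith)
  have hU : IsOpen {z : ℂ | ‖z‖ * τ < 1} :=
    isOpen_lt (continuous_norm.mul continuous_const) continuous_const
  have h0mem : (0:ℂ) ∈ Metric.ball (0:ℂ) ρ := Metric.mem_ball_self hρ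
  have h0disc : ‖(0:ℂ)‖ * τ < 1 := by simpa using hball_sub h0mem
  -- identity exp (φ z) * φ1 z = g1 z on the ball
  have heqev : ∀ z ∈ Metric.ball (0:ℂ) ρ,
      (fun w => Complex.exp (φ w)) =ᶠ[nhds z] (fun w => ∫ a : ℝ, Complex.exp (w * a) ∂F) :=
    fun z hz => Filter.eventuallyEq_of_mem (hU.mem_nhds (hball_sub hz))
      (fun w hw => (hφ w hw).2.1)
  have hderiv_id : ∀ z ∈ Metric.ball (0:ℂ) ρ, Complex.exp (φ z) * φ1 z = g1 z := by
    intro z hz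
    have h2 : HasDerivAt (fun w => Complex.exp (φ w)) (Complex.exp (φ z) * φ1 z) z :=
      ((hφ_an z (hball_sub hz)).differentiableAt.hasDerivAt).cexp
    have h2' : HasDerivAt (fun w => ∫ a : ℝ, Complex.exp (w * a) ∂F)
        (Complex.exp (φ z) * φ1 z) z := h2.congr_of_eventuallyEq (heqev z hz).symm
    exact h2'.unique (hg z hz).2
  -- value of g1 0 and g2 0
  have hg1_0 : g1 0 = 0 := by
    simp only [hg1def, zero_mul, Complex.exp_zero, one_mul]
    rw [show (∫ a : ℝ, (a:ℂ) ∂F) = ((∫ a : ℝ, a ∂F : ℝ) : ℂ) from integral_ofReal,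
      hmean, Complex.ofReal_zero]
  have hmean_sq : (∫ a : ℝ, a ^ 2 ∂F) = σ ^ 2 := by
    have hmem2 : MemLp id 2 F := by
      refine (memLp_two_iff_integrable_sq aestronglyMeasurable_id).2 ?_
      simpa using intsq
    have hv := variance_eq_sub hmem2
    rw [hvar] at hv
    simp only [Pi.pow_apply, id_eq, hmean] at hv
    norm_num at hv
    linarith
  have hg2_0 : g2 0 = (σ ^ 2 : ℝ) := by
    simp only [hg2def, zero_mul, Complex.exp_zero, one_mul]
    rw [show (∫ a : ℝ, (a:ℂ) * a ∂F) = ∫ a : ℝ, ((a ^ 2 : ℝ) : ℂ) ∂F from by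
      congr 1; funext a; push_cast; ring]
    rw [show (∫ a : ℝ, ((a ^ 2 : ℝ):ℂ) ∂F) = ((∫ a : ℝ, a ^ 2 ∂F : ℝ) : ℂ) from integral_ofReal,
      hmean_sq]
  -- first derivative at 0 vanishes
  have hφ1_0 : φ1 0 = 0 := by
    have h00 := hderiv_id 0 h0mem
    rw [hφ0, Complex.exp_zero, one_mul, hg1_0] at h00
    exact h00
  -- second derivative at 0 equals σ²
  have hφ2_0 : φ2 0 = (σ ^ 2 : ℝ) := by
    have hGev : (fun z => Complex.exp (φ z) * φ1 z) =ᶠ[nhds 0] g1 :=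
      Filter.eventuallyEq_of_mem (Metric.isOpen_ball.mem_nhds h0mem)
        (fun z hz => hderiv_id z hz)
    have hdG : HasDerivAt (fun z => Complex.exp (φ z) * φ1 z)
        (Complex.exp (φ 0) * φ1 0 * φ1 0 + Complex.exp (φ 0) * φ2 0) 0 :=
      HasDerivAt.mul (((hφ_an 0 h0disc).differentiableAt.hasDerivAt).cexp)
        ((an1 0 h0disc).differentiableAt.hasDerivAt)
    rw [hφ0, Complex.exp_zero, hφ1_0] at hdG
    simp only [one_mul, mul_zero, zero_mul, zero_add] at hdG
    have hdg1' : HasDerivAt g1 (φ2 0) 0 := hdG.congr_of_eventuallyEq hGev.symm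
    have := hdg1'.unique (hg1 0 h0mem).2
    rw [this, hg2_0]
  -- Taylor estimate along the real axis
  have htay : ∀ h : ℝ, 0 ≤ h → h * τ < 1 →
      (φ h).re ≤ σ ^ 2 * h ^ 2 / 2 + τ * σ ^ 2 * h ^ 3 / 6 := by
    intro h h0 hh
    have hdisc : ∀ t : ℝ, t ∈ Set.Icc 0 h → ‖(t:ℂ)‖ * τ < 1 := by
      intro t ht
      have h1 : ‖(t:ℂ)‖ = |t| := by simp [Complex.norm_real]
      have h2 : |t| ≤ h := abs_le.2 ⟨by linarith [ht.1], ht.2⟩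
      rw [h1]
      calc |t| * τ ≤ h * τ := mul_le_mul_of_nonneg_right h2 hτ.le
        _ < 1 := hh
    have cont : ∀ f : ℂ → ℂ, (∀ z : ℂ, ‖z‖ * τ < 1 → AnalyticAt ℂ f z) →
        ContinuousOn (fun s : ℝ => f s) (Set.Icc 0 h) := by
      intro f hf t ht
      exact (((hf t (hdisc t ht)).continuousAt).comp
        Complex.continuous_ofReal.continuousAt).continuousWithinAt
    -- step a : second derivative close to σ²
    have stepa : ∀ t ∈ Set.Icc (0:ℝ) h, ‖φ2 t - ((σ ^ 2 : ℝ) : ℂ)‖ ≤ τ * σ ^ 2 * t := by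
      intro t ht
      have hIcc : Set.uIcc (0:ℝ) t = Set.Icc 0 t := Set.uIcc_of_le ht.1
      have hsub : Set.Icc (0:ℝ) t ⊆ Set.Icc 0 h := Set.Icc_subset_Icc le_rfl ht.2
      have hFTC : ∫ s in (0:ℝ)..t, φ3 s = φ2 t - φ2 0 := by
        apply intervalIntegral.integral_eq_sub_of_hasDerivAt
        · intro s hs
          have hs' := hdisc s (hsub (hIcc ▸ hs))
          exact ((an2 _ hs').differentiableAt.hasDerivAt).comp_ofReal
        · exact (((cont φ3 an3).mono hsub).mono (le_of_eq hIcc)).intervalIntegrable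
      have hnorm : ‖∫ s in (0:ℝ)..t, φ3 s‖ ≤ τ * σ ^ 2 * |t - 0| := by
        apply intervalIntegral.norm_integral_le_of_norm_le_const
        intro s hs
        rw [Set.uIoc_of_le ht.1] at hs
        exact hd3 s (hdisc s ⟨hs.1.le, hs.2.trans ht.2⟩)
      rw [hFTC, hφ2_0] at hnorm
      simpa [abs_of_nonneg ht.1] using hnorm
    -- step b : first derivative close to σ² t
    have stepb : ∀ t ∈ Set.Icc (0:ℝ) h,
        ‖φ1 t - ((σ ^ 2 : ℝ) : ℂ) * t‖ ≤ τ * σ ^ 2 * t ^ 2 / 2 := by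
      intro t ht
      have hIcc : Set.uIcc (0:ℝ) t = Set.Icc 0 t := Set.uIcc_of_le ht.1
      have hsub : Set.Icc (0:ℝ) t ⊆ Set.Icc 0 h := Set.Icc_subset_Icc le_rfl ht.2
      have hcont2 : ContinuousOn (fun s : ℝ => φ2 s) (Set.uIcc 0 t) :=
        ((cont φ2 an2).mono hsub).mono (le_of_eq hIcc)
      have hFTC : ∫ s in (0:ℝ)..t, φ2 s = φ1 t - φ1 0 := by
        apply intervalIntegral.integral_eq_sub_of_hasDerivAt
        · intro s hs
          have hs' := hdisc s (hsub (hIcc ▸ hs))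
          exact ((an1 _ hs').differentiableAt.hasDerivAt).comp_ofReal
        · exact hcont2.intervalIntegrable
      have hsplit : φ1 t - ((σ ^ 2 : ℝ) : ℂ) * t
          = ∫ s in (0:ℝ)..t, (φ2 s - ((σ ^ 2 : ℝ) : ℂ)) := by
        rw [intervalIntegral.integral_sub hcont2.intervalIntegrable
          (intervalIntegrable_const), hFTC, hφ1_0, sub_zero,
          intervalIntegral.integral_const]
        simp [mul_comm]
      rw [hsplit]
      have hb : ‖∫ s in (0:ℝ)..t, (φ2 s - ((σ ^ 2 : ℝ) : ℂ))‖
          ≤ |∫ s in (0:ℝ)..t, τ * σ ^ 2 * s| := by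
        apply intervalIntegral.norm_integral_le_abs_of_norm_le
        · filter_upwards [ae_restrict_mem measurableSet_uIoc] with s hs
          rw [Set.uIoc_of_le ht.1] at hs
          exact stepa s ⟨hs.1.le, hs.2.trans ht.2⟩
        · exact (continuous_const.mul continuous_id).intervalIntegrable _ _
      have hval : (∫ s in (0:ℝ)..t, τ * σ ^ 2 * s) = τ * σ ^ 2 * t ^ 2 / 2 := by
        rw [intervalIntegral.integral_const_mul, integral_id]; ring
      have hge : (0:ℝ) ≤ τ * σ ^ 2 * t ^ 2 / 2 :=
        div_nonneg (mul_nonneg (mul_nonneg hτ.le (sq_nonneg σ)) (sq_nonneg t)) (by norm_num)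
      rw [hval, abs_of_nonneg hge] at hb
      exact hb
    -- step c : the function itself
    have hIcch : Set.uIcc (0:ℝ) h = Set.Icc 0 h := Set.uIcc_of_le h0
    have hcont1 : ContinuousOn (fun s : ℝ => φ1 s) (Set.uIcc 0 h) :=
      (cont φ1 an1).mono (le_of_eq hIcch)
    have hFTCh : ∫ s in (0:ℝ)..h, φ1 s = φ h - φ 0 := by
      apply intervalIntegral.integral_eq_sub_of_hasDerivAt
      · intro s hs
        have hs' := hdisc s (hIcch ▸ hs)
        exact ((hφ_an _ hs').differentiableAt.hasDerivAt).comp_ofReal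
      · exact hcont1.intervalIntegrable
    have hlin : ∫ s in (0:ℝ)..h, ((σ ^ 2 : ℝ) : ℂ) * s = ((σ ^ 2 * h ^ 2 / 2 : ℝ) : ℂ) := by
      rw [intervalIntegral.integral_const_mul]
      rw [show (∫ s in (0:ℝ)..h, (s:ℂ)) = ((∫ s in (0:ℝ)..h, s : ℝ) : ℂ) from
        intervalIntegral.integral_ofReal]
      rw [integral_id]
      push_cast
      ring
    have hsplit : φ h - ((σ ^ 2 * h ^ 2 / 2 : ℝ) : ℂ)
        = ∫ s in (0:ℝ)..h, (φ1 s - ((σ ^ 2 : ℝ) : ℂ) * s) := by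
      rw [intervalIntegral.integral_sub (g := fun s : ℝ => ((σ ^ 2 : ℝ) : ℂ) * s) hcont1.intervalIntegrable
        ((continuous_const.mul Complex.continuous_ofReal).intervalIntegrable _ _),
        hFTCh, hφ0, sub_zero, hlin]
    have hb : ‖φ h - ((σ ^ 2 * h ^ 2 / 2 : ℝ) : ℂ)‖ ≤ τ * σ ^ 2 * h ^ 3 / 6 := by
      rw [hsplit]
      have h1 : ‖∫ s in (0:ℝ)..h, (φ1 s - ((σ ^ 2 : ℝ) : ℂ) * s)‖
          ≤ |∫ s in (0:ℝ)..h, τ * σ ^ 2 * s ^ 2 / 2| := by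
        apply intervalIntegral.norm_integral_le_abs_of_norm_le
        · filter_upwards [ae_restrict_mem measurableSet_uIoc] with s hs
          rw [Set.uIoc_of_le h0] at hs
          exact stepb s ⟨hs.1.le, hs.2⟩
        · exact ((continuous_const.mul (continuous_pow 2)).div_const 2).intervalIntegrable _ _
      refine h1.trans ?_
      have hval : (∫ s in (0:ℝ)..h, τ * σ ^ 2 * s ^ 2 / 2) = τ * σ ^ 2 * h ^ 3 / 6 := by
        have heq : ∀ s : ℝ, τ * σ ^ 2 * s ^ 2 / 2 = (τ * σ ^ 2 / 2) * s ^ 2 := fun s => by ring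
        simp_rw [heq]
        rw [intervalIntegral.integral_const_mul, integral_pow]
        norm_num; ring
      have hge : (0:ℝ) ≤ τ * σ ^ 2 * h ^ 3 / 6 := by
        have : (0:ℝ) ≤ h ^ 3 := pow_nonneg h0 3
        have := mul_nonneg (mul_nonneg hτ.le (sq_nonneg σ)) this
        linarith
      rw [hval, abs_of_nonneg hge]
    have hre : (φ h - ((σ ^ 2 * h ^ 2 / 2 : ℝ) : ℂ)).re ≤ ‖φ h - ((σ ^ 2 * h ^ 2 / 2 : ℝ) : ℂ)‖ :=
      Complex.re_le_norm _
    rw [Complex.sub_re, Complex.ofReal_re] at hre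
    linarith
  -- mgf identity
  have hmgf : ∀ t : ℝ, 0 ≤ t → t * τ < 1 → mgf id F t = Real.exp ((φ t).re) := by
    intro t ht0 ht1
    have hdisct : ‖(t:ℂ)‖ * τ < 1 := by
      rw [show ‖(t:ℂ)‖ = |t| by simp [Complex.norm_real], abs_of_nonneg ht0]; exact ht1
    have h1 := (hφ t hdisct).2.1
    have h2 : (∫ a : ℝ, Complex.exp ((t:ℂ) * a) ∂F) = ((mgf id F t : ℝ) : ℂ) := by
      rw [show (fun a : ℝ => Complex.exp ((t:ℂ) * a))
          = fun a : ℝ => ((Real.exp (t * a) : ℝ) : ℂ) from by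
        funext a
        rw [Complex.ofReal_exp]
        norm_cast]
      rw [show (∫ a : ℝ, ((Real.exp (t * a) : ℝ) : ℂ) ∂F)
          = ((∫ a : ℝ, Real.exp (t * a) ∂F : ℝ) : ℂ) from integral_ofReal]
      rfl
    have h3 : Complex.exp (φ t) = ((mgf id F t : ℝ) : ℂ) := by rw [h1]; exact h2
    have h4 := congrArg norm h3
    rw [Complex.norm_exp, Complex.norm_real, Real.norm_eq_abs, abs_of_nonneg mgf_nonneg] at h4
    exact h4.symm
  -- Chernoff bound
  have hcher : ∀ t : ℝ, 0 ≤ t → t * τ < 1 →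
      (F {y : ℝ | x ≤ y}).toReal
        ≤ Real.exp (-t * x + (σ ^ 2 * t ^ 2 / 2 + τ * σ ^ 2 * t ^ 3 / 6)) := by
    intro t ht0 ht1
    have hint : Integrable (fun a : ℝ => Real.exp (t * a)) F :=
      int_exp t (by rwa [abs_of_nonneg ht0])
    have hint' : Integrable (fun ω : ℝ => Real.exp (t * id ω)) F := hint
    have h1 : (F {y : ℝ | x ≤ y}).toReal ≤ Real.exp (-t * x) * mgf id F t := by
      have h2 := measure_ge_le_exp_mul_mgf (X := id) (μ := F) x ht0 hint'
      simpa [measureReal_def] using h2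
    rw [hmgf t ht0 ht1] at h1
    refine h1.trans ?_
    rw [← Real.exp_add]
    apply Real.exp_le_exp.2
    have := htay t ht0 ht1
    linarith
  -- final case analysis
  rcases hx.eq_or_lt with hx0 | hxpos
  · have h1 : (F {y : ℝ | x ≤ y}).toReal ≤ 1 := by
      have h2 := (ENNReal.toReal_le_toReal (measure_ne_top F _) (measure_ne_top F _)).2
        (measure_mono (Set.subset_univ {y : ℝ | x ≤ y}))
      rwa [measure_univ, ENNReal.toReal_one] at h2
    refine le_max_of_le_right (h1.trans ?_)
    rw [← hx0]
    norm_num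
  · by_cases hcase : τ * x ≤ σ ^ 2
    · have hs2 : 0 < σ ^ 2 := lt_of_lt_of_le (by positivity) hcase
      have h1 := hcher (x / (2 * σ ^ 2)) (div_nonneg hxpos.le (by positivity))
        (bern_aux1 hτ hxpos hs2 hcase)
      exact le_max_of_le_left (h1.trans (Real.exp_le_exp.2
        (bern_arith1 hτ hxpos hs2 hcase)))
    · push_neg at hcase
      have ht1 : (1 / (2 * τ)) * τ < 1 := by
        rw [div_mul_eq_mul_div, div_lt_iff₀ (by positivity)]
        nlinarith
      have h1 := hcher (1 / (2 * τ)) (by positivity) ht1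
      exact le_max_of_le_right (h1.trans (Real.exp_le_exp.2
        (bern_arith2 hτ hx hcase)))
end
end

section
/- Let τ ≥ 0 and let ξ be a real random variable with E ξ = 0 and Var ξ = σ² whose distribution belongs to the class A₁(τ). Then for every real h with |h|τ < 1, one has log E exp(hξ) = (σ²h²/2)(1 + θ|h|τ/3) for some real θ with |θ| ≤ 1; in particular |log E exp(hξ) − σ²h²/2| ≤ σ²h²|h|τ/6. -/
open MeasureTheory ProbabilityTheory

noncomputable section

open Set in
lemma taylor_step {f f' : ℝ → ℂ} {C : ℝ} {n : ℕ}
    (hd : ∀ t ∈ Icc (0:ℝ) 1, HasDerivAt f (f' t) t)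
    (hb : ∀ t ∈ Icc (0:ℝ) 1, ‖f' t‖ ≤ C * t ^ n)
    (h0 : f 0 = 0) :
    ∀ t ∈ Icc (0:ℝ) 1, ‖f t‖ ≤ C * t ^ (n + 1) / (n + 1 : ℝ) := by
  have hB : ∀ t : ℝ, HasDerivAt (fun t : ℝ => C * t ^ (n + 1) / (n + 1 : ℝ)) (C * t ^ n) t := by
    intro t
    have h1 : HasDerivAt (fun t : ℝ => C * t ^ (n + 1) / (n + 1 : ℝ))
        (C * ((n + 1 : ℕ) * t ^ n) / (n + 1 : ℝ)) t := by
      simpa using ((hasDerivAt_pow (n + 1) t).const_mul C).div_const (n + 1 : ℝ)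
    convert h1 using 1
    have : ((n : ℝ) + 1) ≠ 0 := by positivity
    push_cast
    field_simp
  intro t ht
  refine image_norm_le_of_norm_deriv_right_le_deriv_boundary
    (f := f) (f' := f') (a := 0) (b := 1)
    (fun x hx => ((hd x hx).continuousAt).continuousWithinAt)
    (fun x hx => (hd x (Ico_subset_Icc_self hx)).hasDerivWithinAt)
    ?_ hB (fun x hx => hb x (Ico_subset_Icc_self hx)) ht
  simp [h0]


/-- Expansion of the log-Laplace transform on the class `A₁(τ)`: for `|h| τ < 1`,
`log E e^{hξ} = (σ²h²/2)(1 + θ|h|τ/3)` with `|θ| ≤ 1`. -/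
theorem log_mgf_expansion_A1
    (τ σ : ℝ) (hτ : 0 ≤ τ) (F : Measure ℝ) [IsProbabilityMeasure F]
    (hmean : (∫ x : ℝ, x ∂F) = 0) (hvar : variance id F = σ ^ 2) (hA : MemA1 τ F)
    (h : ℝ) (hh : |h| * τ < 1) :
    ∃ θ : ℝ, |θ| ≤ 1 ∧
      Real.log (∫ x : ℝ, Real.exp (h * x) ∂F) =
        σ ^ 2 * h ^ 2 / 2 * (1 + θ * |h| * τ / 3) := by
  obtain ⟨φ, hφ0, hφ⟩ := hA
  -- choose δ
  obtain ⟨δ, hδ, hδτ⟩ : ∃ δ > 0, (|h| + 4 * δ) * τ < 1 := by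
    rcases eq_or_lt_of_le hτ with hτ0 | hτ0
    · exact ⟨1, one_pos, by rw [← hτ0]; norm_num⟩
    · refine ⟨(1 - |h| * τ) / (8 * τ), div_pos (by linarith) (by linarith), ?_⟩
      have hτne : τ ≠ 0 := ne_of_gt hτ0
      have h4 : 4 * ((1 - |h| * τ) / (8 * τ)) * τ = (1 - |h| * τ) / 2 := by
        field_simp; ring
      have : (|h| + 4 * ((1 - |h| * τ) / (8 * τ))) * τ
          = |h| * τ + (1 - |h| * τ) / 2 := by rw [add_mul, h4]
      rw [this]; linarith
  have habs : (0:ℝ) ≤ |h| := abs_nonneg h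
  -- membership in the disc
  have hmem : ∀ z : ℂ, ‖z‖ ≤ |h| + 4 * δ → ‖z‖ * τ < 1 := fun z hz =>
    lt_of_le_of_lt (mul_le_mul_of_nonneg_right hz hτ) hδτ
  -- real integrability of exponentials
  have I1 : ∀ c : ℝ, |c| * τ < 1 → Integrable (fun x : ℝ => Real.exp (c * x)) F := by
    intro c hc
    have h2 := (hφ (c : ℂ) (by simpa using hc)).1.norm
    refine h2.congr ?_
    filter_upwards with x
    rw [← Complex.ofReal_mul, Complex.norm_exp, Complex.ofReal_re]
  have Eb : ∀ b : ℝ, 0 ≤ b → b ≤ |h| + 4 * δ →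
      Integrable (fun x : ℝ => Real.exp (b * x) + Real.exp (-b * x)) F := by
    intro b hb0 hb
    have h1 : |b| * τ < 1 := by
      rw [abs_of_nonneg hb0]
      exact lt_of_le_of_lt (mul_le_mul_of_nonneg_right hb hτ) hδτ
    have h2 : |(-b)| * τ < 1 := by rwa [abs_neg]
    exact (I1 b h1).add (I1 (-b) h2)
  have expabs : ∀ b x : ℝ, Real.exp (b * |x|) ≤ Real.exp (b * x) + Real.exp (-b * x) := by
    intro b x
    rcases abs_cases x with ⟨hx, _⟩ | ⟨hx, _⟩ <;> rw [hx]
    · exact le_add_of_nonneg_right (Real.exp_pos _).le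
    · have hbx : b * -x = -b * x := by ring
      rw [hbx]
      exact le_add_of_nonneg_left (Real.exp_pos _).le
  -- domination helpers
  have habs_le : ∀ b x : ℝ, 0 ≤ b → b * |x| ≤ Real.exp (b * |x|) := by
    intro b x _
    linarith [Real.add_one_le_exp (b * |x|)]
  have hxint : Integrable (fun x : ℝ => x) F := by
    refine Integrable.mono ((Eb δ hδ.le (by linarith)).const_mul (1/δ)) ?_ ?_
    · exact aestronglyMeasurable_id
    · filter_upwards with x
      have h1 : δ * |x| ≤ Real.exp (δ * |x|) := habs_le δ x hδ.le
      have h2 : Real.exp (δ * |x|) ≤ Real.exp (δ * x) + Real.exp (-δ * x) := expabs δ x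
      rw [Real.norm_eq_abs, Real.norm_eq_abs]
      have h3 : |x| ≤ (1/δ) * (Real.exp (δ * x) + Real.exp (-δ * x)) := by
        rw [one_div, inv_mul_eq_div, le_div_iff₀ hδ]
        nlinarith
      calc |x| ≤ (1/δ) * (Real.exp (δ * x) + Real.exp (-δ * x)) := h3
      _ ≤ |(1/δ) * (Real.exp (δ * x) + Real.exp (-δ * x))| := le_abs_self _
  have hx2int : Integrable (fun x : ℝ => x ^ 2) F := by
    refine Integrable.mono ((Eb (2*δ) (by linarith) (by linarith)).const_mul (1/δ^2)) ?_ ?_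
    · exact (continuous_pow 2).aestronglyMeasurable
    · filter_upwards with x
      have h1 : δ * |x| ≤ Real.exp (δ * |x|) := habs_le δ x hδ.le
      have h2 : (δ * |x|)^2 ≤ Real.exp (δ * |x|) ^ 2 := by
        have := mul_nonneg hδ.le (abs_nonneg x)
        nlinarith
      have h3 : Real.exp (δ * |x|) ^ 2 = Real.exp (2 * δ * |x|) := by
        rw [← Real.exp_nat_mul]; ring_nf
      have h4 : Real.exp (2 * δ * |x|) ≤ Real.exp (2 * δ * x) + Real.exp (-(2 * δ) * x) :=
        expabs (2*δ) x
      rw [Real.norm_eq_abs, Real.norm_eq_abs]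
      have hd2 : (0:ℝ) < δ^2 := by positivity
      have h5 : x^2 ≤ (1/δ^2) * (Real.exp (2*δ * x) + Real.exp (-(2*δ) * x)) := by
        have hxx : (δ * |x|)^2 = δ^2 * x^2 := by rw [mul_pow, sq_abs]
        rw [one_div, inv_mul_eq_div, le_div_iff₀ hd2]
        nlinarith
      calc |x^2| = x^2 := abs_of_nonneg (sq_nonneg x)
      _ ≤ (1/δ^2) * (Real.exp (2*δ * x) + Real.exp (-(2*δ) * x)) := h5
      _ ≤ |(1/δ^2) * (Real.exp (2*δ * x) + Real.exp (-(2*δ) * x))| := le_abs_self _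
  -- second moment
  have hint2 : (∫ x : ℝ, x ^ 2 ∂F) = σ ^ 2 := by
    have hmem2 : MemLp (id : ℝ → ℝ) 2 F :=
      (memLp_two_iff_integrable_sq aestronglyMeasurable_id).2 (by simpa using hx2int)
    have hv := variance_eq_sub (μ := F) hmem2
    rw [hvar] at hv
    simp only [Pi.pow_apply, id_eq] at hv
    rw [hmean] at hv
    simpa using hv.symm
  -- differentiation under the integral sign
  have contexp : ∀ z : ℂ, Continuous fun x : ℝ => Complex.exp (z * x) := fun z =>
    Complex.continuous_exp.comp (continuous_const.mul Complex.continuous_ofReal)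
  have e2 : ∀ x : ℝ, |x| ≤ (1/δ) * Real.exp (δ*|x|) := by
    intro x
    rw [one_div, inv_mul_eq_div, le_div_iff₀ hδ]
    nlinarith [habs_le δ x hδ.le, Real.exp_pos (δ*|x|)]
  have hψd : ∀ z₀ : ℂ, ‖z₀‖ < δ → HasDerivAt (fun z => ∫ x : ℝ, Complex.exp (z * x) ∂F)
      (∫ x : ℝ, Complex.exp (z₀ * x) * x ∂F) z₀ := by
    intro z₀ hz₀
    have key := hasDerivAt_integral_of_dominated_loc_of_deriv_le (μ := F) (𝕜 := ℂ)
      (F := fun (z : ℂ) (x : ℝ) => Complex.exp (z * x))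
      (F' := fun (z : ℂ) (x : ℝ) => Complex.exp (z * x) * x)
      (x₀ := z₀) (s := Metric.ball z₀ δ)
      (bound := fun x => (1/δ) * (Real.exp (3*δ * x) + Real.exp (-(3*δ) * x)))
      (Metric.ball_mem_nhds z₀ hδ)
      (Filter.Eventually.of_forall fun z => (contexp z).aestronglyMeasurable)
      (hφ z₀ (hmem z₀ (by linarith))).1
      (((contexp z₀).mul Complex.continuous_ofReal).aestronglyMeasurable)
      ?_ ((Eb (3*δ) (by linarith) (by linarith)).const_mul _) ?_
    · exact key.2
    · refine Filter.Eventually.of_forall fun x => fun z hz => ?_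
      have hre : |z.re| ≤ ‖z‖ := Complex.abs_re_le_norm z
      have hz2 : ‖z‖ < 2*δ := by
        have h1 : ‖z - z₀‖ < δ := mem_ball_iff_norm.mp hz
        have h2 : ‖z‖ ≤ ‖z₀‖ + ‖z - z₀‖ := by simpa using norm_add_le z₀ (z - z₀)
        linarith
      have e1 : Real.exp (z.re * x) ≤ Real.exp (2*δ*|x|) := by
        apply Real.exp_le_exp.2
        calc z.re * x ≤ |z.re * x| := le_abs_self _
        _ = |z.re| * |x| := abs_mul _ _
        _ ≤ (2*δ) * |x| := mul_le_mul_of_nonneg_right (hre.trans hz2.le) (abs_nonneg x)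
      calc ‖Complex.exp (z * x) * x‖ = Real.exp (z.re * x) * |x| := by
            rw [norm_mul, Complex.norm_exp, Complex.norm_real,
              Real.norm_eq_abs]
            congr 2
            simp [Complex.mul_re]
      _ ≤ Real.exp (2*δ*|x|) * ((1/δ) * Real.exp (δ*|x|)) :=
          mul_le_mul e1 (e2 x) (abs_nonneg x) (Real.exp_pos _).le
      _ = (1/δ) * (Real.exp (2*δ*|x|) * Real.exp (δ*|x|)) := by ring
      _ = (1/δ) * Real.exp (2*δ*|x| + δ*|x|) := by rw [← Real.exp_add]
      _ = (1/δ) * Real.exp (3*δ*|x|) := by ring_nf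
      _ ≤ (1/δ) * (Real.exp (3*δ*x) + Real.exp (-(3*δ)*x)) :=
          mul_le_mul_of_nonneg_left (expabs _ _) (by positivity)
    · refine Filter.Eventually.of_forall fun x => fun z hz => ?_
      simpa using ((hasDerivAt_id z).mul_const ((x:ℝ):ℂ)).cexp
  have hψ1d : HasDerivAt (fun z : ℂ => ∫ x : ℝ, Complex.exp (z * x) * x ∂F)
      (∫ x : ℝ, Complex.exp ((0:ℂ) * x) * x * x ∂F) 0 := by
    have key := hasDerivAt_integral_of_dominated_loc_of_deriv_le (μ := F) (𝕜 := ℂ)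
      (F := fun (z : ℂ) (x : ℝ) => Complex.exp (z * x) * x)
      (F' := fun (z : ℂ) (x : ℝ) => Complex.exp (z * x) * x * x)
      (x₀ := (0:ℂ)) (s := Metric.ball (0:ℂ) δ)
      (bound := fun x => (1/δ^2) * (Real.exp (3*δ * x) + Real.exp (-(3*δ) * x)))
      (Metric.ball_mem_nhds (0:ℂ) hδ)
      (Filter.Eventually.of_forall fun z =>
        ((contexp z).mul Complex.continuous_ofReal).aestronglyMeasurable)
      (hxint.ofReal.congr (Filter.Eventually.of_forall fun x => by simp))
      ((((contexp 0).mul Complex.continuous_ofReal).mul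
        Complex.continuous_ofReal).aestronglyMeasurable)
      ?_ ((Eb (3*δ) (by linarith) (by linarith)).const_mul _) ?_
    · exact key.2
    · refine Filter.Eventually.of_forall fun x => fun z hz => ?_
      have hre : |z.re| ≤ ‖z‖ := Complex.abs_re_le_norm z
      have hz2 : ‖z‖ < δ := by simpa using mem_ball_zero_iff.mp hz
      have e1 : Real.exp (z.re * x) ≤ Real.exp (δ*|x|) := by
        apply Real.exp_le_exp.2
        calc z.re * x ≤ |z.re * x| := le_abs_self _
        _ = |z.re| * |x| := abs_mul _ _
        _ ≤ δ * |x| := mul_le_mul_of_nonneg_right (hre.trans hz2.le) (abs_nonneg x)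
      have e3 : |x| * |x| ≤ (1/δ^2) * Real.exp (2*δ*|x|) := by
        have := e2 x
        have h4 : Real.exp (δ*|x|) * Real.exp (δ*|x|) = Real.exp (2*δ*|x|) := by
          rw [← Real.exp_add]; ring_nf
        calc |x| * |x| ≤ ((1/δ) * Real.exp (δ*|x|)) * ((1/δ) * Real.exp (δ*|x|)) :=
              mul_le_mul this this (abs_nonneg x) (by positivity)
        _ = (1/δ^2) * (Real.exp (δ*|x|) * Real.exp (δ*|x|)) := by ring
        _ = (1/δ^2) * Real.exp (2*δ*|x|) := by rw [h4]
      calc ‖Complex.exp (z * x) * x * x‖ = Real.exp (z.re * x) * (|x| * |x|) := by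
            rw [norm_mul, norm_mul, Complex.norm_exp, Complex.norm_real,
              Real.norm_eq_abs]
            rw [mul_assoc]
            congr 2
            simp [Complex.mul_re]
      _ ≤ Real.exp (δ*|x|) * ((1/δ^2) * Real.exp (2*δ*|x|)) :=
          mul_le_mul e1 e3 (by positivity) (Real.exp_pos _).le
      _ = (1/δ^2) * (Real.exp (δ*|x|) * Real.exp (2*δ*|x|)) := by ring
      _ = (1/δ^2) * Real.exp (δ*|x| + 2*δ*|x|) := by rw [← Real.exp_add]
      _ = (1/δ^2) * Real.exp (3*δ*|x|) := by ring_nf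
      _ ≤ (1/δ^2) * (Real.exp (3*δ*x) + Real.exp (-(3*δ)*x)) :=
          mul_le_mul_of_nonneg_left (expabs _ _) (by positivity)
    · refine Filter.Eventually.of_forall fun x => fun z hz => ?_
      simpa using (((hasDerivAt_id z).mul_const ((x:ℝ):ℂ)).cexp).mul_const ((x:ℝ):ℂ)
  -- analyticity on the disc
  set S : Set ℂ := {z : ℂ | ‖z‖ * τ < 1} with hSdef
  have hSo : IsOpen S := isOpen_lt (continuous_norm.mul continuous_const) continuous_const
  have hmemS : ∀ z : ℂ, ‖z‖ ≤ |h| + 4 * δ → z ∈ S := fun z hz => hmem z hz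
  have h0S : (0:ℂ) ∈ S := hmemS 0 (by simp; linarith)
  have han : AnalyticOnNhd ℂ φ S := fun z hz => (hφ z hz).2.2.1
  have han1 : AnalyticOnNhd ℂ (deriv φ) S := han.deriv
  have han2 : AnalyticOnNhd ℂ (deriv (deriv φ)) S := han1.deriv
  have hballS : ∀ z : ℂ, ‖z‖ < δ → z ∈ S := fun z hz => hmemS z (by linarith)
  have hEq : ∀ z ∈ S, Complex.exp (φ z) = ∫ x : ℝ, Complex.exp (z * x) ∂F :=
    fun z hz => (hφ z hz).2.1
  have hkey : ∀ z : ℂ, ‖z‖ < δ →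
      (∫ x : ℝ, Complex.exp (z * x) * x ∂F) = Complex.exp (φ z) * deriv φ z := by
    intro z hz
    have h1 := hψd z hz
    have h2 : HasDerivAt (fun w => Complex.exp (φ w)) (Complex.exp (φ z) * deriv φ z) z :=
      ((han z (hballS z hz)).differentiableAt.hasDerivAt).cexp
    have heq : (fun z => ∫ x : ℝ, Complex.exp (z * x) ∂F)
        =ᶠ[nhds z] fun w => Complex.exp (φ w) :=
      Filter.eventuallyEq_of_mem (hSo.mem_nhds (hballS z hz)) fun w hw => (hEq w hw).symm
    exact h1.unique (h2.congr_of_eventuallyEq heq)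
  have hψ10 : (∫ x : ℝ, Complex.exp ((0:ℂ) * x) * x ∂F) = 0 := by
    have hfun : (fun x : ℝ => Complex.exp ((0:ℂ) * x) * x) = fun x : ℝ => ((x:ℝ):ℂ) := by
      funext x; simp
    have h5 : (∫ x : ℝ, ((x:ℝ):ℂ) ∂F) = ((∫ x : ℝ, x ∂F : ℝ) : ℂ) := integral_ofReal
    rw [hfun, h5, hmean, Complex.ofReal_zero]
  have hφ10 : deriv φ 0 = 0 := by
    have hk := hkey 0 (by simpa using hδ)
    rw [hψ10, hφ0, Complex.exp_zero, one_mul] at hk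
    exact hk.symm
  have hψ20 : (∫ x : ℝ, Complex.exp ((0:ℂ) * x) * x * x ∂F) = ((σ^2 : ℝ) : ℂ) := by
    have hfun : (fun x : ℝ => Complex.exp ((0:ℂ) * x) * x * x) = fun x : ℝ => ((x^2 : ℝ):ℂ) := by
      funext x; push_cast; simp; ring
    have h5 : (∫ x : ℝ, ((x^2:ℝ):ℂ) ∂F) = ((∫ x : ℝ, x^2 ∂F : ℝ) : ℂ) := integral_ofReal
    rw [hfun, h5, hint2]
  have hφ20 : deriv (deriv φ) 0 = ((σ^2:ℝ) : ℂ) := by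
    have h1 : HasDerivAt (fun z : ℂ => ∫ x : ℝ, Complex.exp (z * x) * x ∂F)
        (((σ^2:ℝ):ℂ)) 0 := hψ20 ▸ hψ1d
    have h2 : HasDerivAt (fun w : ℂ => Complex.exp (φ w) * deriv φ w)
        ((Complex.exp (φ 0) * deriv φ 0) * deriv φ 0
          + Complex.exp (φ 0) * deriv (deriv φ) 0) 0 :=
      (((han 0 h0S).differentiableAt.hasDerivAt).cexp).mul
        ((han1 0 h0S).differentiableAt.hasDerivAt)
    have heq : (fun z : ℂ => ∫ x : ℝ, Complex.exp (z * x) * x ∂F)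
        =ᶠ[nhds 0] fun w => Complex.exp (φ w) * deriv φ w :=
      Filter.eventuallyEq_of_mem (Metric.ball_mem_nhds 0 hδ)
        fun w hw => hkey w (mem_ball_zero_iff.mp hw)
    have huniq := h1.unique (h2.congr_of_eventuallyEq heq)
    rw [hφ0, hφ10] at huniq
    simpa using huniq.symm
  -- third derivative bound
  have hiter : iteratedDeriv 3 φ = deriv (deriv (deriv φ)) := by
    rw [show (3:ℕ) = 2+1 from rfl, iteratedDeriv_succ,
      show (2:ℕ) = 1+1 from rfl, iteratedDeriv_succ, iteratedDeriv_one]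
  have hbound3 : ∀ z ∈ S, ‖deriv (deriv (deriv φ)) z‖ ≤ τ * σ^2 := by
    intro z hz
    have hb := (hφ z hz).2.2.2
    rwa [hiter, hvar] at hb
  -- the real segment t ↦ t·h
  have hu : ∀ t : ℝ, HasDerivAt (fun s : ℝ => ((s:ℂ) * (h:ℂ))) ((h:ℂ)) t := by
    intro t
    simpa using (Complex.ofRealCLM.hasDerivAt.mul_const ((h:ℂ)))
  have hpath : ∀ t ∈ Set.Icc (0:ℝ) 1, ((t:ℂ) * (h:ℂ)) ∈ S := by
    intro t ht
    apply hmemS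
    rw [norm_mul, Complex.norm_real, Complex.norm_real, Real.norm_eq_abs, Real.norm_eq_abs,
      abs_of_nonneg ht.1]
    nlinarith [ht.2]
  set C : ℝ := |h| * (τ * σ^2) with hC
  have hC0 : 0 ≤ C := by
    rw [hC]; exact mul_nonneg habs (mul_nonneg hτ (sq_nonneg σ))
  -- Taylor step 1 : second derivative
  have hstep2 : ∀ t ∈ Set.Icc (0:ℝ) 1,
      ‖deriv (deriv φ) ((t:ℂ)*(h:ℂ)) - ((σ^2:ℝ):ℂ)‖ ≤ C * t := by
    have key := taylor_step (n := 0) (C := C)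
      (f := fun t : ℝ => deriv (deriv φ) ((t:ℂ)*(h:ℂ)) - ((σ^2:ℝ):ℂ))
      (f' := fun t : ℝ => (h:ℂ) • deriv (deriv (deriv φ)) ((t:ℂ)*(h:ℂ)))
      ?_ ?_ ?_
    · intro t ht
      simpa using key t ht
    · intro t ht
      have hd : HasDerivAt (deriv (deriv φ)) (deriv (deriv (deriv φ)) ((t:ℂ)*(h:ℂ)))
          ((t:ℂ)*(h:ℂ)) := (han2 _ (hpath t ht)).differentiableAt.hasDerivAt
      exact (HasDerivAt.scomp_of_eq t hd (hu t) rfl).sub_const _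
    · intro t ht
      rw [norm_smul, Complex.norm_real, Real.norm_eq_abs, pow_zero, mul_one, hC]
      exact mul_le_mul_of_nonneg_left (hbound3 _ (hpath t ht)) habs
    · simp [hφ20]
  -- Taylor step 2 : first derivative
  have hstep1 : ∀ t ∈ Set.Icc (0:ℝ) 1,
      ‖deriv φ ((t:ℂ)*(h:ℂ)) - ((σ^2:ℝ):ℂ) * ((t:ℂ)*(h:ℂ))‖ ≤ |h| * C * t^2 / 2 := by
    have key := taylor_step (n := 1) (C := |h| * C)
      (f := fun t : ℝ => deriv φ ((t:ℂ)*(h:ℂ)) - ((σ^2:ℝ):ℂ) * ((t:ℂ)*(h:ℂ)))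
      (f' := fun t : ℝ => (h:ℂ) • deriv (deriv φ) ((t:ℂ)*(h:ℂ)) - ((σ^2:ℝ):ℂ) * (h:ℂ))
      ?_ ?_ ?_
    · intro t ht
      have := key t ht
      norm_num at this
      simpa using this
    · intro t ht
      have hd : HasDerivAt (deriv φ) (deriv (deriv φ) ((t:ℂ)*(h:ℂ)))
          ((t:ℂ)*(h:ℂ)) := (han1 _ (hpath t ht)).differentiableAt.hasDerivAt
      exact (HasDerivAt.scomp_of_eq t hd (hu t) rfl).sub ((hu t).const_mul _)
    · intro t ht
      have e : ((h:ℂ) • deriv (deriv φ) ((t:ℂ)*(h:ℂ)) - ((σ^2:ℝ):ℂ) * (h:ℂ))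
          = (h:ℂ) * (deriv (deriv φ) ((t:ℂ)*(h:ℂ)) - ((σ^2:ℝ):ℂ)) := by
        rw [smul_eq_mul]; ring
      simp only [e]
      rw [norm_mul, Complex.norm_real, Real.norm_eq_abs, pow_one, mul_assoc]
      exact mul_le_mul_of_nonneg_left (hstep2 t ht) habs
    · simp [hφ10]
  -- Taylor step 3 : the function itself
  have hstep0 : ∀ t ∈ Set.Icc (0:ℝ) 1,
      ‖φ ((t:ℂ)*(h:ℂ)) - ((σ^2:ℝ):ℂ) * (((t:ℂ)*(h:ℂ)) * ((t:ℂ)*(h:ℂ))) / 2‖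
        ≤ |h| * (|h| * C) / 2 * t^3 / 3 := by
    have key := taylor_step (n := 2) (C := |h| * (|h| * C) / 2)
      (f := fun t : ℝ => φ ((t:ℂ)*(h:ℂ))
        - ((σ^2:ℝ):ℂ) * (((t:ℂ)*(h:ℂ)) * ((t:ℂ)*(h:ℂ))) / 2)
      (f' := fun t : ℝ => (h:ℂ) • deriv φ ((t:ℂ)*(h:ℂ))
        - ((σ^2:ℝ):ℂ) * ((h:ℂ) * ((t:ℂ)*(h:ℂ)) + ((t:ℂ)*(h:ℂ)) * (h:ℂ)) / 2)
      ?_ ?_ ?_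
    · intro t ht
      have := key t ht
      norm_num at this
      simpa using this
    · intro t ht
      have hd : HasDerivAt φ (deriv φ ((t:ℂ)*(h:ℂ))) ((t:ℂ)*(h:ℂ)) :=
        (han _ (hpath t ht)).differentiableAt.hasDerivAt
      exact (HasDerivAt.scomp_of_eq t hd (hu t) rfl).sub
        ((((hu t).mul (hu t)).const_mul _).div_const 2)
    · intro t ht
      have e : ((h:ℂ) • deriv φ ((t:ℂ)*(h:ℂ))
            - ((σ^2:ℝ):ℂ) * ((h:ℂ) * ((t:ℂ)*(h:ℂ)) + ((t:ℂ)*(h:ℂ)) * (h:ℂ)) / 2)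
          = (h:ℂ) * (deriv φ ((t:ℂ)*(h:ℂ)) - ((σ^2:ℝ):ℂ) * ((t:ℂ)*(h:ℂ))) := by
        rw [smul_eq_mul]; ring
      simp only [e]
      rw [norm_mul, Complex.norm_real, Real.norm_eq_abs]
      calc |h| * ‖deriv φ ((t:ℂ)*(h:ℂ)) - ((σ^2:ℝ):ℂ) * ((t:ℂ)*(h:ℂ))‖
          ≤ |h| * (|h| * C * t^2 / 2) := mul_le_mul_of_nonneg_left (hstep1 t ht) habs
      _ = |h| * (|h| * C) / 2 * t^2 := by ring
    · simp [hφ0]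
  -- evaluate at t = 1
  have htay : ‖φ ((h:ℝ):ℂ) - ((σ^2:ℝ):ℂ) * ((h:ℂ) * (h:ℂ)) / 2‖
      ≤ |h| * (|h| * C) / 2 / 3 := by
    have := hstep0 1 (by norm_num)
    simpa using this
  -- the integral is positive
  set M : ℝ := ∫ x : ℝ, Real.exp (h * x) ∂F with hM
  have hMint : Integrable (fun x : ℝ => Real.exp (h * x)) F := I1 h hh
  have hMpos : 0 < M := by
    rw [hM, integral_pos_iff_support_of_nonneg (fun x => (Real.exp_pos _).le) hMint]
    have hsupp : Function.support (fun x : ℝ => Real.exp (h * x)) = Set.univ :=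
      Set.eq_univ_of_forall fun x => (Real.exp_pos _).ne'
    rw [hsupp]
    simp
  have hhS : ((h:ℝ):ℂ) ∈ S := hmemS _ (by rw [Complex.norm_real, Real.norm_eq_abs]; linarith)
  have hEqh : Complex.exp (φ ((h:ℝ):ℂ)) = ((M:ℝ):ℂ) := by
    rw [hEq _ hhS]
    have hfun : (fun x : ℝ => Complex.exp (((h:ℝ):ℂ) * x))
        = fun x : ℝ => ((Real.exp (h*x) : ℝ) : ℂ) := by
      funext x
      rw [← Complex.ofReal_mul, Complex.ofReal_exp]
    rw [hfun]
    exact integral_ofReal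
  have hre : (φ ((h:ℝ):ℂ)).re = Real.log M := by
    have habs2 : Real.exp ((φ ((h:ℝ):ℂ)).re) = M := by
      have hc := congrArg norm hEqh
      rwa [Complex.norm_exp, Complex.norm_real, Real.norm_eq_abs, abs_of_pos hMpos] at hc
    rw [← habs2, Real.log_exp]
  -- the key bound
  have hkey2 : |Real.log M - σ^2*h^2/2| ≤ σ^2*h^2/2 * (|h| * τ/3) := by
    have h1 : Real.log M - σ^2*h^2/2
        = (φ ((h:ℝ):ℂ) - ((σ^2:ℝ):ℂ) * ((h:ℂ) * (h:ℂ)) / 2).re := by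
      rw [Complex.sub_re, hre]
      congr 1
      rw [show ((σ^2:ℝ):ℂ) * ((h:ℂ) * (h:ℂ)) / 2 = (((σ^2*h^2/2 : ℝ)):ℂ) by push_cast; ring]
      rw [Complex.ofReal_re]
    rw [h1]
    calc |(φ ((h:ℝ):ℂ) - ((σ^2:ℝ):ℂ) * ((h:ℂ) * (h:ℂ)) / 2).re|
        ≤ ‖φ ((h:ℝ):ℂ) - ((σ^2:ℝ):ℂ) * ((h:ℂ) * (h:ℂ)) / 2‖ :=
          Complex.abs_re_le_norm _
    _ = ‖φ ((h:ℝ):ℂ) - ((σ^2:ℝ):ℂ) * ((h:ℂ) * (h:ℂ)) / 2‖ := rfl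
    _ ≤ |h| * (|h| * C) / 2 / 3 := htay
    _ = σ^2*h^2/2 * (|h| * τ/3) := by
        rw [hC]
        linear_combination (|h| * τ * σ^2 / 6) * sq_abs h
  -- produce θ
  set D : ℝ := σ^2*h^2/2 * (|h| * τ/3) with hD
  have hD0 : 0 ≤ D := by
    rw [hD]
    apply mul_nonneg (by positivity)
    exact div_nonneg (mul_nonneg habs hτ) (by norm_num)
  rcases eq_or_lt_of_le hD0 with hD1 | hD1
  · refine ⟨0, by norm_num, ?_⟩
    have hE0 : Real.log M - σ^2*h^2/2 = 0 := by
      have hk := hkey2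
      rw [← hD1] at hk
      exact abs_eq_zero.mp (le_antisymm hk (abs_nonneg _))
    norm_num
    linarith
  · refine ⟨(Real.log M - σ^2*h^2/2)/D, ?_, ?_⟩
    · rw [abs_div, abs_of_pos hD1, div_le_one hD1]
      exact hkey2
    · have expand : σ^2*h^2/2 * (1 + (Real.log M - σ^2*h^2/2)/D * |h| * τ / 3)
          = σ^2*h^2/2 + (Real.log M - σ^2*h^2/2)/D*D := by rw [hD]; ring
      rw [expand, div_mul_cancel₀ _ (ne_of_gt hD1)]
      ring
end
end

section
/- Let τ ≥ 0 and let ξ be a real random variable with E ξ = 0 and Var ξ = σ² whose distribution belongs to the class A₁(τ). Then for every real h with |h|τ < 1, one has log E exp(ihξ) = −(σ²h²/2)(1 + θ|h|τ/3) for some complex θ with |θ| ≤ 1; in particular |log E exp(ihξ) + σ²h²/2| ≤ σ²h²|h|τ/6. -/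
open MeasureTheory ProbabilityTheory

noncomputable section

lemma exp_abs_le' (a x : ℝ) : Real.exp (a*|x|) ≤ Real.exp (a*x) + Real.exp (-(a*x)) := by
  rcases abs_cases x with ⟨h1,_⟩|⟨h1,_⟩ <;> rw [h1]
  · exact le_add_of_nonneg_right (Real.exp_pos _).le
  · rw [mul_neg]; exact le_add_of_nonneg_left (Real.exp_pos _).le

lemma abs_le_exp (r x : ℝ) (hr : 0 < r) : |x| ≤ (1/r) * Real.exp (r*|x|) := by
  rw [one_div, ← div_eq_inv_mul, le_div_iff₀ hr]
  nlinarith [Real.add_one_le_exp (r*|x|)]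

lemma sq_le_exp (r x : ℝ) (hr : 0 < r) : x^2 ≤ (4/r^2) * Real.exp (r*|x|) := by
  have h := Real.add_one_le_exp (r*|x|/2)
  have h2 : Real.exp (r*|x|/2) * Real.exp (r*|x|/2) = Real.exp (r*|x|) := by
    rw [← Real.exp_add]; ring_nf
  have h4 := mul_le_mul h h (by positivity) (Real.exp_pos _).le
  rw [h2] at h4
  rw [div_mul_eq_mul_div, le_div_iff₀ (by positivity : (0:ℝ) < r^2)]
  nlinarith [abs_nonneg x, sq_abs x, mul_nonneg hr.le (abs_nonneg x)]

lemma norm_cexp_mul_ofReal (z : ℂ) (x : ℝ) : ‖Complex.exp (z * x)‖ = Real.exp (z.re * x) := by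
  rw [Complex.norm_exp]
  congr 1
  simp [Complex.mul_re]

lemma moments_aux (τ : ℝ) (hτ : 0 ≤ τ) (F : Measure ℝ) [IsProbabilityMeasure F]
    (φ : ℂ → ℂ)
    (hint : ∀ z : ℂ, ‖z‖ * τ < 1 → Integrable (fun x : ℝ => Complex.exp (z * x)) F) :
    ∃ r : ℝ, 0 < r ∧ (∀ z ∈ Metric.ball (0:ℂ) r, ‖z‖ * τ < 1) ∧
      Integrable (fun x : ℝ => (x:ℝ)^2) F ∧
      (∀ z₀ ∈ Metric.ball (0:ℂ) r,
        HasDerivAt (fun z => ∫ x : ℝ, Complex.exp (z * x) ∂F)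
          (∫ x : ℝ, Complex.exp (z₀ * x) * x ∂F) z₀) ∧
      HasDerivAt (fun z => ∫ x : ℝ, Complex.exp (z * x) * x ∂F)
        (((∫ x : ℝ, x^2 ∂F : ℝ) : ℂ)) 0 := by
  set r : ℝ := 1/(4*(τ+1)) with hrdef
  have hr : 0 < r := by positivity
  have hrτ : 4 * r * τ < 1 := by
    rw [hrdef, mul_one_div, div_mul_eq_mul_div, div_lt_one (by positivity)]
    nlinarith
  -- integrability of real exponentials
  have hexp_int : ∀ s : ℝ, |s| ≤ 3*r → Integrable (fun x => Real.exp (s*x)) F := by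
    intro s hs
    have h1 : ‖(s:ℂ)‖ * τ < 1 := by
      rw [Complex.norm_real, Real.norm_eq_abs]
      calc |s| * τ ≤ (3*r) * τ := by apply mul_le_mul_of_nonneg_right hs hτ
        _ < 1 := by nlinarith [mul_nonneg hr.le hτ]
    have h2 := (hint s h1).norm
    refine h2.congr (Filter.Eventually.of_forall fun x => ?_)
    simp [Complex.norm_exp, ← Complex.ofReal_mul]
  -- two bounds
  set bd1 : ℝ → ℝ := fun x => (1/r) * (Real.exp ((3*r)*x) + Real.exp (-((3*r)*x))) with hbd1
  set bd2 : ℝ → ℝ := fun x => (4/r^2) * (Real.exp ((2*r)*x) + Real.exp (-((2*r)*x))) with hbd2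
  have hbd1_int : Integrable bd1 F := by
    apply Integrable.const_mul
    refine (hexp_int (3*r) ?_).add ((hexp_int (-(3*r)) ?_).congr (Filter.Eventually.of_forall fun x => by ring_nf))
    · rw [abs_of_pos (by positivity)]
    · rw [abs_neg, abs_of_pos (by positivity)]
  have hbd2_int : Integrable bd2 F := by
    apply Integrable.const_mul
    refine (hexp_int (2*r) ?_).add ((hexp_int (-(2*r)) ?_).congr (Filter.Eventually.of_forall fun x => by ring_nf))
    · rw [abs_of_pos (by positivity)]; nlinarith
    · rw [abs_neg, abs_of_pos (by positivity)]; nlinarith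
  have hb1 : ∀ (z : ℂ) (x : ℝ), ‖z‖ ≤ 2*r → ‖Complex.exp (z*x) * x‖ ≤ bd1 x := by
    intro z x hz
    rw [norm_mul, norm_cexp_mul_ofReal, Complex.norm_real, Real.norm_eq_abs]
    have h1 : z.re * x ≤ (2*r) * |x| := by
      calc z.re * x ≤ |z.re * x| := le_abs_self _
        _ = |z.re| * |x| := abs_mul _ _
        _ ≤ (2*r) * |x| := by
            apply mul_le_mul_of_nonneg_right _ (abs_nonneg x)
            exact (Complex.abs_re_le_norm z).trans hz
    calc Real.exp (z.re * x) * |x| ≤ Real.exp ((2*r)*|x|) * ((1/r) * Real.exp (r*|x|)) := by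
          apply mul_le_mul (Real.exp_le_exp.2 h1) (abs_le_exp r x hr) (abs_nonneg x) (Real.exp_pos _).le
      _ = (1/r) * Real.exp ((3*r)*|x|) := by rw [mul_left_comm, ← Real.exp_add]; ring_nf
      _ ≤ bd1 x := by
          rw [hbd1]
          apply mul_le_mul_of_nonneg_left _ (by positivity)
          exact exp_abs_le' (3*r) x
  have hb2 : ∀ (z : ℂ) (x : ℝ), ‖z‖ ≤ r → ‖Complex.exp (z*x) * x * x‖ ≤ bd2 x := by
    intro z x hz
    rw [norm_mul, norm_mul, norm_cexp_mul_ofReal, Complex.norm_real, Real.norm_eq_abs]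
    have h1 : z.re * x ≤ r * |x| := by
      calc z.re * x ≤ |z.re * x| := le_abs_self _
        _ = |z.re| * |x| := abs_mul _ _
        _ ≤ r * |x| := mul_le_mul_of_nonneg_right ((Complex.abs_re_le_norm z).trans hz) (abs_nonneg x)
    have h2 : |x| * |x| = x^2 := by rw [← abs_mul, abs_mul_self, sq]
    calc Real.exp (z.re * x) * |x| * |x| ≤ Real.exp (r*|x|) * (x^2) := by
          rw [mul_assoc, h2]
          exact mul_le_mul_of_nonneg_right (Real.exp_le_exp.2 h1) (sq_nonneg x)
      _ ≤ Real.exp (r*|x|) * ((4/r^2) * Real.exp (r*|x|)) := by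
          exact mul_le_mul_of_nonneg_left (sq_le_exp r x hr) (Real.exp_pos _).le
      _ = (4/r^2) * Real.exp ((2*r)*|x|) := by rw [mul_left_comm, ← Real.exp_add]; ring_nf
      _ ≤ bd2 x := by
          rw [hbd2]
          apply mul_le_mul_of_nonneg_left (exp_abs_le' (2*r) x) (by positivity)
  have hball_sub : ∀ z : ℂ, ‖z‖ ≤ 2*r → ‖z‖ * τ < 1 := by
    intro z hz
    calc ‖z‖ * τ ≤ (2*r) * τ := mul_le_mul_of_nonneg_right hz hτ
      _ < 1 := by nlinarith [mul_nonneg hr.le hτ]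
  -- step 1
  have step1 : ∀ z₀ ∈ Metric.ball (0:ℂ) r,
      Integrable (fun x : ℝ => Complex.exp (z₀ * x) * x) F ∧
      HasDerivAt (fun z => ∫ x : ℝ, Complex.exp (z * x) ∂F)
        (∫ x : ℝ, Complex.exp (z₀ * x) * x ∂F) z₀ := by
    intro z₀ hz₀
    simp only [Metric.mem_ball, dist_zero_right] at hz₀
    apply hasDerivAt_integral_of_dominated_loc_of_deriv_le (Metric.ball_mem_nhds z₀ hr)
      (bound := bd1) (F' := fun z x => Complex.exp (z * x) * x)
    · exact Filter.Eventually.of_forall fun z =>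
        (Complex.continuous_exp.comp (continuous_const.mul Complex.continuous_ofReal)).aestronglyMeasurable
    · exact hint z₀ (hball_sub z₀ (by linarith [hz₀.le, hr.le]))
    · exact ((Complex.continuous_exp.comp (continuous_const.mul Complex.continuous_ofReal)).mul
        Complex.continuous_ofReal).aestronglyMeasurable
    · refine Filter.Eventually.of_forall fun x => fun z hz => hb1 z x ?_
      simp only [Metric.mem_ball] at hz
      calc ‖z‖ = ‖z - z₀ + z₀‖ := by rw [sub_add_cancel]
        _ ≤ ‖z - z₀‖ + ‖z₀‖ := norm_add_le _ _
        _ ≤ 2*r := by rw [← dist_eq_norm] at *; linarith [hz.le, hz₀.le]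
    · exact hbd1_int
    · exact Filter.Eventually.of_forall fun x => fun z _ => (hasDerivAt_mul_const (x:ℂ)).cexp
  -- step 2
  have step2 : Integrable (fun x : ℝ => Complex.exp ((0:ℂ) * x) * x * x) F ∧
      HasDerivAt (fun z => ∫ x : ℝ, Complex.exp (z * x) * x ∂F)
        (∫ x : ℝ, Complex.exp ((0:ℂ) * x) * x * x ∂F) 0 := by
    apply hasDerivAt_integral_of_dominated_loc_of_deriv_le (Metric.ball_mem_nhds 0 hr)
      (bound := bd2) (F' := fun z x => Complex.exp (z * x) * x * x)
    · exact Filter.Eventually.of_forall fun z =>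
        ((Complex.continuous_exp.comp (continuous_const.mul Complex.continuous_ofReal)).mul
          Complex.continuous_ofReal).aestronglyMeasurable
    · exact (step1 0 (Metric.mem_ball_self hr)).1
    · exact (((Complex.continuous_exp.comp (continuous_const.mul Complex.continuous_ofReal)).mul
        Complex.continuous_ofReal).mul Complex.continuous_ofReal).aestronglyMeasurable
    · refine Filter.Eventually.of_forall fun x => fun z hz => hb2 z x ?_
      simp only [Metric.mem_ball, dist_zero_right] at hz
      exact hz.le
    · exact hbd2_int
    · exact Filter.Eventually.of_forall fun x => fun z _ =>
        ((hasDerivAt_mul_const (x:ℂ)).cexp).mul_const (x:ℂ)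
  -- square integrable
  have hsq : Integrable (fun x : ℝ => (x:ℝ)^2) F := by
    have h := step2.1.norm
    refine h.congr (Filter.Eventually.of_forall fun x => ?_)
    simp [norm_mul, ← sq, Complex.norm_real, Real.norm_eq_abs, sq_abs]
  refine ⟨r, hr, ?_, hsq, fun z₀ hz₀ => (step1 z₀ hz₀).2, ?_⟩
  · intro z hz
    simp only [Metric.mem_ball, dist_zero_right] at hz
    exact hball_sub z (by linarith [hz.le, hr.le])
  have h2 := step2.2
  have heq : ∫ x : ℝ, Complex.exp ((0:ℂ) * x) * x * x ∂F = ((∫ x : ℝ, x^2 ∂F : ℝ) : ℂ) :=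
    calc ∫ x : ℝ, Complex.exp ((0:ℂ) * x) * x * x ∂F = ∫ x : ℝ, ((x^2 : ℝ) : ℂ) ∂F := by
          refine integral_congr_ae (Filter.Eventually.of_forall fun x => ?_)
          simp [sq]
      _ = ((∫ x : ℝ, x^2 ∂F : ℝ) : ℂ) := integral_ofReal
  rwa [heq] at h2

set_option maxHeartbeats 1000000 in
lemma taylor_bound (φ : ℂ → ℂ) (τ σ h : ℝ) (hτ : 0 ≤ τ) (hh : |h| * τ < 1)
    (hφ0 : φ 0 = 0) (hd1 : deriv φ 0 = 0) (hd2 : deriv (deriv φ) 0 = ((σ^2:ℝ):ℂ))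
    (hA : AnalyticOnNhd ℂ φ {z : ℂ | ‖z‖ * τ < 1})
    (hM : ∀ z : ℂ, ‖z‖ * τ < 1 → ‖deriv (deriv (deriv φ)) z‖ ≤ τ * σ^2) :
    ‖φ (Complex.I * h) + ((σ^2 * h^2 / 2 : ℝ) : ℂ)‖ ≤ τ * σ^2 * |h|^3 / 6 := by
  set z₀ : ℂ := Complex.I * h with hz₀def
  have hz₀ : ‖z₀‖ = |h| := by
    rw [hz₀def, norm_mul, Complex.norm_I, one_mul, Complex.norm_real, Real.norm_eq_abs]
  set M : ℝ := τ * σ^2 with hMdef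
  have hM0 : 0 ≤ M := mul_nonneg hτ (sq_nonneg σ)
  have hBsub : ∀ z : ℂ, ‖z‖ ≤ |h| → ‖z‖ * τ < 1 := fun z hz =>
    lt_of_le_of_lt (mul_le_mul_of_nonneg_right hz hτ) hh
  have hA1 := hA.deriv
  have hA2 := hA1.deriv
  have hmemt : ∀ t : ℝ, t ∈ Set.Icc (0:ℝ) 1 → ‖(t:ℂ) * z₀‖ ≤ |h| := by
    intro t ht
    rw [norm_mul, Complex.norm_real, Real.norm_eq_abs, hz₀, abs_of_nonneg ht.1]
    nlinarith [abs_nonneg h, ht.1, ht.2]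
  -- MVI bound for the second derivative
  have hf2 : ∀ z : ℂ, ‖z‖ ≤ |h| → ‖deriv (deriv φ) z - ((σ^2:ℝ):ℂ)‖ ≤ M * ‖z‖ := by
    intro z hz
    have key := Convex.norm_image_sub_le_of_norm_hasDerivWithin_le
      (f := deriv (deriv φ)) (f' := fun w => deriv (deriv (deriv φ)) w) (C := M)
      (s := Metric.closedBall (0:ℂ) |h|)
      (fun w hw => ((hA2 w (hBsub w (by simpa using hw))).differentiableAt.hasDerivAt).hasDerivWithinAt)
      (fun w hw => hM w (hBsub w (by simpa using hw)))
      (convex_closedBall _ _) (Metric.mem_closedBall_self (abs_nonneg h))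
      (by simpa using hz)
    simpa [hd2] using key
  -- first integration: bound on G t = φ'(t z₀) - σ² t z₀
  set G : ℂ → ℂ := fun u => deriv φ (u * z₀) - ((σ^2:ℝ):ℂ) * (u * z₀) with hGdef
  set G' : ℂ → ℂ := fun u => (deriv (deriv φ) (u * z₀) - ((σ^2:ℝ):ℂ)) * z₀ with hG'def
  have hGd : ∀ u : ℂ, ‖u * z₀‖ ≤ |h| → HasDerivAt G (G' u) u := by
    intro u hu
    have h1 : HasDerivAt (fun v : ℂ => deriv φ (v * z₀)) (deriv (deriv φ) (u * z₀) * z₀) u :=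
      HasDerivAt.comp u (h₂ := deriv φ) ((hA1 _ (hBsub _ hu)).differentiableAt.hasDerivAt) (hasDerivAt_mul_const z₀)
    have h2 := (hasDerivAt_mul_const (x := u) z₀).const_mul ((σ^2:ℝ):ℂ)
    have := h1.sub h2
    refine this.congr_deriv ?_
    rw [hG'def]; ring
  have hGcont : ∀ t : ℝ, t ∈ Set.Icc (0:ℝ) 1 → ContinuousAt (fun s : ℝ => G' s) t := by
    intro t ht
    have h1 : ContinuousAt (fun s : ℝ => ((s:ℂ) * z₀)) t :=
      (Complex.continuous_ofReal.mul continuous_const).continuousAt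
    have h4 : ContinuousAt (deriv (deriv φ)) ((t:ℂ) * z₀) :=
      (hA2 _ (hBsub _ (hmemt t ht))).continuousAt
    have h5 : ContinuousAt (fun s : ℝ => deriv (deriv φ) ((s:ℂ) * z₀)) t :=
      ContinuousAt.comp (f := fun s : ℝ => (s:ℂ) * z₀) h4 h1
    show ContinuousAt (fun s : ℝ => (deriv (deriv φ) ((s:ℂ) * z₀) - ((σ^2:ℝ):ℂ)) * z₀) t
    exact (h5.sub continuousAt_const).mul continuousAt_const
  have hGbound : ∀ t : ℝ, t ∈ Set.Icc (0:ℝ) 1 → ‖G t‖ ≤ M * |h|^2 * t^2 / 2 := by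
    intro t ht
    have huIcc : Set.uIcc (0:ℝ) t ⊆ Set.Icc (0:ℝ) 1 := by
      rw [Set.uIcc_of_le ht.1]
      exact Set.Icc_subset_Icc le_rfl ht.2
    have hftc : ∫ s in (0:ℝ)..t, G' s = G t - G 0 := by
      apply intervalIntegral.integral_eq_sub_of_hasDerivAt
      · intro s hs
        exact ((hGd s (hmemt s (huIcc hs))).comp_ofReal)
      · exact (ContinuousOn.intervalIntegrable
          (fun s hs => (hGcont s (huIcc hs)).continuousWithinAt))
    have hG0 : G 0 = 0 := by simp [hGdef, hd1]
    have hnorm : ‖∫ s in (0:ℝ)..t, G' s‖ ≤ |∫ s in (0:ℝ)..t, M * |h|^2 * s| := by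
      apply intervalIntegral.norm_integral_le_abs_of_norm_le
      · refine Filter.eventually_of_mem (self_mem_ae_restrict measurableSet_uIoc) fun s hs => ?_
        rw [Set.uIoc_of_le ht.1] at hs
        have hs01 : s ∈ Set.Icc (0:ℝ) 1 := ⟨hs.1.le, hs.2.trans ht.2⟩
        have := hf2 _ (hmemt s hs01)
        rw [hG'def]
        rw [norm_mul, hz₀]
        calc ‖deriv (deriv φ) ((s:ℂ) * z₀) - ((σ^2:ℝ):ℂ)‖ * |h|
            ≤ (M * ‖(s:ℂ) * z₀‖) * |h| := mul_le_mul_of_nonneg_right this (abs_nonneg h)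
          _ = M * |h|^2 * s := by
              rw [norm_mul, Complex.norm_real, Real.norm_eq_abs, hz₀, abs_of_nonneg hs.1.le]
              ring
      · exact (continuous_const.mul continuous_id).intervalIntegrable _ _
    have hval : ∫ s in (0:ℝ)..t, M * |h|^2 * s = M * |h|^2 * t^2 / 2 := by
      rw [intervalIntegral.integral_const_mul, integral_id]
      ring
    rw [hftc, hG0, sub_zero] at hnorm
    rw [hval] at hnorm
    calc ‖G t‖ ≤ |M * |h|^2 * t^2 / 2| := hnorm
      _ = M * |h|^2 * t^2 / 2 := abs_of_nonneg (by positivity)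
  -- second integration
  set H : ℂ → ℂ := fun v => φ (v * z₀) - ((σ^2:ℝ):ℂ) * (v * z₀)^2 / 2 with hHdef
  have hHd : ∀ u : ℂ, ‖u * z₀‖ ≤ |h| → HasDerivAt H (G u * z₀) u := by
    intro u hu
    have h1 : HasDerivAt (fun v : ℂ => φ (v * z₀)) (deriv φ (u * z₀) * z₀) u :=
      HasDerivAt.comp u ((hA _ (hBsub _ hu)).differentiableAt.hasDerivAt) (hasDerivAt_mul_const z₀)
    have h2 : HasDerivAt (fun v : ℂ => ((σ^2:ℝ):ℂ) * (v * z₀)^2 / 2)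
        (((σ^2:ℝ):ℂ) * (2 * (u * z₀)^1 * z₀) / 2) u :=
      (((hasDerivAt_mul_const z₀).pow 2).const_mul ((σ^2:ℝ):ℂ)).div_const 2
    have := h1.sub h2
    refine this.congr_deriv ?_
    rw [hGdef]; ring
  have hHcont : ∀ t : ℝ, t ∈ Set.Icc (0:ℝ) 1 → ContinuousAt (fun s : ℝ => G s * z₀) t := by
    intro t ht
    have h1 : ContinuousAt (fun s : ℝ => ((s:ℂ) * z₀)) t :=
      (Complex.continuous_ofReal.mul continuous_const).continuousAt
    have h4 : ContinuousAt (deriv φ) ((t:ℂ) * z₀) := (hA1 _ (hBsub _ (hmemt t ht))).continuousAt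
    have h5 : ContinuousAt (fun s : ℝ => deriv φ ((s:ℂ) * z₀)) t :=
      ContinuousAt.comp (f := fun s : ℝ => (s:ℂ) * z₀) h4 h1
    show ContinuousAt (fun s : ℝ => (deriv φ ((s:ℂ) * z₀) - ((σ^2:ℝ):ℂ) * ((s:ℂ) * z₀)) * z₀) t
    exact ((h5.sub (continuousAt_const.mul h1)).mul continuousAt_const)
  have hftc2 : ∫ t in (0:ℝ)..1, G ↑t * z₀ = H ((1:ℝ):ℂ) - H ((0:ℝ):ℂ) := by
    refine intervalIntegral.integral_eq_sub_of_hasDerivAt (f := fun t : ℝ => H ↑t)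
      (f' := fun t : ℝ => G ↑t * z₀) ?_ ?_
    · intro t ht
      rw [Set.uIcc_of_le (by norm_num : (0:ℝ) ≤ 1)] at ht
      exact ((hHd t (hmemt t ht)).comp_ofReal)
    · refine ContinuousOn.intervalIntegrable fun t ht => ?_
      rw [Set.uIcc_of_le (by norm_num : (0:ℝ) ≤ 1)] at ht
      exact (hHcont t ht).continuousWithinAt
  have hnorm2 : ‖∫ t in (0:ℝ)..1, G ↑t * z₀‖ ≤
      |∫ t in (0:ℝ)..1, (M * |h|^2 * |h| / 2) * t^2| := by
    apply intervalIntegral.norm_integral_le_abs_of_norm_le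
    · refine Filter.eventually_of_mem (self_mem_ae_restrict measurableSet_uIoc) fun t ht => ?_
      rw [Set.uIoc_of_le (by norm_num : (0:ℝ) ≤ 1)] at ht
      have ht01 : t ∈ Set.Icc (0:ℝ) 1 := ⟨ht.1.le, ht.2⟩
      rw [norm_mul, hz₀]
      calc ‖G ↑t‖ * |h| ≤ (M * |h|^2 * t^2 / 2) * |h| :=
            mul_le_mul_of_nonneg_right (hGbound t ht01) (abs_nonneg h)
        _ = (M * |h|^2 * |h| / 2) * t^2 := by ring
    · exact (continuous_const.mul (continuous_pow 2)).intervalIntegrable _ _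
  have hval2 : ∫ t in (0:ℝ)..1, (M * |h|^2 * |h| / 2) * t^2 = M * |h|^3 / 6 := by
    rw [intervalIntegral.integral_const_mul, integral_pow,
      show ((1:ℝ)^(2+1) - 0^(2+1))/((2:ℕ)+1) = 1/3 by norm_num]
    ring
  have hH1 : H ((1:ℝ):ℂ) - H ((0:ℝ):ℂ) = φ (Complex.I * h) + ((σ^2 * h^2 / 2 : ℝ) : ℂ) := by
    rw [hHdef]
    simp only [Complex.ofReal_one, Complex.ofReal_zero, one_mul, zero_mul, hφ0]
    have hz₀sq : z₀^2 = -(h:ℂ)^2 := by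
      rw [hz₀def, mul_pow, Complex.I_sq]; ring
    rw [hz₀sq]
    push_cast
    ring
  rw [hftc2, hH1] at hnorm2
  rw [hval2] at hnorm2
  calc ‖φ (Complex.I * h) + ((σ^2 * h^2 / 2 : ℝ) : ℂ)‖ ≤ |M * |h|^3 / 6| := hnorm2
    _ = τ * σ^2 * |h|^3 / 6 := by rw [abs_of_nonneg (by positivity), hMdef]


set_option maxHeartbeats 1000000 in
/-- Expansion of the analytic logarithm `φ` of the Laplace transform at purely imaginary
points: for `|h| τ < 1`, `φ(ih) = -(σ²h²/2)(1 + θ|h|τ/3)` with `θ ∈ ℂ`, `‖θ‖ ≤ 1`. -/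
theorem log_charfun_expansion_A1
    (τ σ : ℝ) (hτ : 0 ≤ τ) (F : Measure ℝ) [IsProbabilityMeasure F]
    (hmean : (∫ x : ℝ, x ∂F) = 0) (hvar : variance id F = σ ^ 2)
    (φ : ℂ → ℂ) (hφ : IsCGF φ τ F)
    (h : ℝ) (hh : |h| * τ < 1) :
    ∃ θ : ℂ, ‖θ‖ ≤ 1 ∧
      φ (Complex.I * (h : ℂ)) =
        -(((σ ^ 2 * h ^ 2 / 2 : ℝ)) : ℂ) * (1 + θ * (((|h| * τ / 3 : ℝ)) : ℂ)) := by
  obtain ⟨hφ0, hφD⟩ := hφ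
  obtain ⟨r, hr, hball, hsq, hstep1, hstep2⟩ := moments_aux τ hτ F φ (fun z hz => (hφD z hz).1)
  have hAn : ∀ z : ℂ, ‖z‖ * τ < 1 → AnalyticAt ℂ φ z := fun z hz => (hφD z hz).2.2.1
  have hAnD : AnalyticOnNhd ℂ φ {z : ℂ | ‖z‖ * τ < 1} := fun z hz => hAn z hz
  have hA1 := hAnD.deriv
  have h0ball : (0:ℂ) ∈ Metric.ball (0:ℂ) r := Metric.mem_ball_self hr
  -- identity exp(φ z) * φ'(z) = ∫ exp(zx) x on the ball
  have hkey : ∀ z ∈ Metric.ball (0:ℂ) r,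
      Complex.exp (φ z) * deriv φ z = ∫ x : ℝ, Complex.exp (z * x) * x ∂F := by
    intro z hz
    have h1 : HasDerivAt (fun w => Complex.exp (φ w)) (Complex.exp (φ z) * deriv φ z) z :=
      ((hAn z (hball z hz)).differentiableAt.hasDerivAt).cexp
    have h2 : HasDerivAt (fun z => ∫ x : ℝ, Complex.exp (z * x) ∂F)
        (Complex.exp (φ z) * deriv φ z) z := by
      apply h1.congr_of_eventuallyEq
      filter_upwards [Metric.isOpen_ball.mem_nhds hz] with w hw
        using ((hφD w (hball w hw)).2.1).symm
    exact h2.unique (hstep1 z hz)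
  -- first derivative at 0
  have hd1 : deriv φ 0 = 0 := by
    have hk := hkey 0 h0ball
    rw [hφ0, Complex.exp_zero, one_mul] at hk
    rw [hk]
    calc ∫ x : ℝ, Complex.exp ((0:ℂ) * x) * x ∂F = ∫ x : ℝ, ((x : ℝ) : ℂ) ∂F := by
          refine integral_congr_ae (Filter.Eventually.of_forall fun x => ?_); simp
      _ = ((∫ x : ℝ, x ∂F : ℝ) : ℂ) := integral_ofReal
      _ = 0 := by rw [hmean]; simp
  -- second moment equals σ²
  have hintsq : ∫ x : ℝ, x ^ 2 ∂F = σ ^ 2 := by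
    have hm : MemLp id 2 F :=
      (memLp_two_iff_integrable_sq aestronglyMeasurable_id).2 (by simpa using hsq)
    have hv := variance_eq_sub hm
    rw [hvar] at hv
    simp only [Pi.pow_apply, id_eq] at hv
    rw [hmean] at hv
    simpa using hv.symm
  -- second derivative at 0
  have hd2 : deriv (deriv φ) 0 = ((σ ^ 2 : ℝ) : ℂ) := by
    have hg : HasDerivAt (fun w => Complex.exp (φ w) * deriv φ w)
        ((Complex.exp (φ 0) * deriv φ 0) * deriv φ 0 +
          Complex.exp (φ 0) * deriv (deriv φ) 0) 0 :=
      (((hAn 0 (hball 0 h0ball)).differentiableAt.hasDerivAt).cexp).mul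
        ((hA1 0 (hball 0 h0ball)).differentiableAt.hasDerivAt)
    rw [hφ0, Complex.exp_zero, hd1] at hg
    simp only [one_mul, mul_zero, zero_mul, zero_add] at hg
    have hg2 : HasDerivAt (fun z => ∫ x : ℝ, Complex.exp (z * x) * x ∂F)
        (deriv (deriv φ) 0) 0 := by
      apply hg.congr_of_eventuallyEq
      filter_upwards [Metric.isOpen_ball.mem_nhds h0ball] with w hw using (hkey w hw).symm
    rw [hg2.unique hstep2, hintsq]
  -- third derivative bound
  have hM : ∀ z : ℂ, ‖z‖ * τ < 1 → ‖deriv (deriv (deriv φ)) z‖ ≤ τ * σ ^ 2 := by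
    intro z hz
    have hb := (hφD z hz).2.2.2
    rw [hvar] at hb
    rwa [show iteratedDeriv 3 φ = deriv (deriv (deriv φ)) by
      simp [iteratedDeriv_eq_iterate, Function.iterate_succ, Function.iterate_zero]] at hb
  -- Taylor bound
  have hT := taylor_bound φ τ σ h hτ hh hφ0 hd1 hd2 hAnD hM
  -- assemble θ
  set R : ℂ := φ (Complex.I * h) + ((σ ^ 2 * h ^ 2 / 2 : ℝ) : ℂ) with hRdef
  set c : ℝ := σ ^ 2 * h ^ 2 / 2 * (|h| * τ / 3) with hcdef
  have hc_eq : τ * σ ^ 2 * |h| ^ 3 / 6 = c := by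
    rw [hcdef, ← sq_abs h]; ring
  rw [hc_eq] at hT
  have hc0 : 0 ≤ c := by rw [hcdef]; positivity
  by_cases hc : c = 0
  · refine ⟨0, by norm_num, ?_⟩
    have hR0 : R = 0 := norm_le_zero_iff.1 (hc ▸ hT)
    have : φ (Complex.I * h) = -((σ ^ 2 * h ^ 2 / 2 : ℝ) : ℂ) := by
      have := hR0
      rw [hRdef] at this
      linear_combination this
    rw [this]; ring
  · have hcpos : 0 < c := lt_of_le_of_ne hc0 (Ne.symm hc)
    refine ⟨-R / (c : ℂ), ?_, ?_⟩
    · rw [norm_div, norm_neg]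
      have hcc : ‖((c:ℝ):ℂ)‖ = c := by
        rw [Complex.norm_real, Real.norm_eq_abs, abs_of_pos hcpos]
      rw [hcc, div_le_one hcpos]
      exact hT
    · have hcne : (c : ℂ) ≠ 0 := by exact_mod_cast hc
      field_simp
      rw [hRdef, hcdef]
      push_cast
      ring
end
end

section
/- Let τ > 0 and let ξ₁ and ξ₂ be independent real random variables whose distributions F₁ and F₂ both belong to the class A₁(τ). Then the distribution of ξ₁ + ξ₂, i.e. the convolution F₁ * F₂, also belongs to the class A₁(τ). -/
open MeasureTheory ProbabilityTheory

noncomputable section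

/- ### Auxiliary lemmas -/

/-- Iterated derivatives within an open set agree with global iterated derivatives. -/
lemma iteratedDerivWithin_of_isOpen' {f : ℂ → ℂ} {s : Set ℂ} (hs : IsOpen s) {z : ℂ}
    (hz : z ∈ s) (n : ℕ) : iteratedDerivWithin n f s z = iteratedDeriv n f z := by
  rw [iteratedDerivWithin_eq_iteratedFDerivWithin, iteratedDeriv_eq_iteratedFDeriv,
    iteratedFDerivWithin_of_isOpen n hs hz]

/-- Additivity of iterated derivatives of functions analytic on an open set. -/
lemma iteratedDeriv_add_of_analyticOnNhd {f g : ℂ → ℂ} {s : Set ℂ} (hs : IsOpen s) {z : ℂ}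
    (hz : z ∈ s) (hf : AnalyticOnNhd ℂ f s) (hg : AnalyticOnNhd ℂ g s) (n : ℕ) :
    iteratedDeriv n (f + g) z = iteratedDeriv n f z + iteratedDeriv n g z := by
  have hu : UniqueDiffOn ℂ s := hs.uniqueDiffOn
  have hcf : ContDiffOn ℂ n f s := hf.contDiffOn_of_completeSpace
  have hcg : ContDiffOn ℂ n g s := hg.contDiffOn_of_completeSpace
  rw [← iteratedDerivWithin_of_isOpen' hs hz, ← iteratedDerivWithin_of_isOpen' hs hz (f := f),
    ← iteratedDerivWithin_of_isOpen' hs hz (f := g)]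
  exact iteratedDerivWithin_add hz hu (hcf z hz) (hcg z hz)

/-- Expectation of a product of independent integrable complex random variables. -/
theorem ProbabilityTheory.IndepFun.integral_complex_mul {Ω : Type*} [MeasurableSpace Ω] {P : Measure Ω}
    {X Y : Ω → ℂ} (h : IndepFun X Y P) (hX : Integrable X P) (hY : Integrable Y P) :
    ∫ ω, X ω * Y ω ∂P = (∫ ω, X ω ∂P) * ∫ ω, Y ω ∂P := by
  have hXY : Integrable (fun ω => X ω * Y ω) P := h.integrable_mul hX hY
  have ha : Integrable (fun ω => (X ω).re) P := by simpa using hX.re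
  have hb : Integrable (fun ω => (X ω).im) P := by simpa using hX.im
  have hc : Integrable (fun ω => (Y ω).re) P := by simpa using hY.re
  have hd : Integrable (fun ω => (Y ω).im) P := by simpa using hY.im
  have iac : IndepFun (fun ω => (X ω).re) (fun ω => (Y ω).re) P :=
    h.comp Complex.measurable_re Complex.measurable_re
  have iad : IndepFun (fun ω => (X ω).re) (fun ω => (Y ω).im) P :=
    h.comp Complex.measurable_re Complex.measurable_im
  have ibc : IndepFun (fun ω => (X ω).im) (fun ω => (Y ω).re) P :=
    h.comp Complex.measurable_im Complex.measurable_re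
  have ibd : IndepFun (fun ω => (X ω).im) (fun ω => (Y ω).im) P :=
    h.comp Complex.measurable_im Complex.measurable_im
  have hac : Integrable (fun ω => (X ω).re * (Y ω).re) P := iac.integrable_mul ha hc
  have had : Integrable (fun ω => (X ω).re * (Y ω).im) P := iad.integrable_mul ha hd
  have hbc : Integrable (fun ω => (X ω).im * (Y ω).re) P := ibc.integrable_mul hb hc
  have hbd : Integrable (fun ω => (X ω).im * (Y ω).im) P := ibd.integrable_mul hb hd
  have eac := iac.integral_mul_eq_mul_integral ha.aestronglyMeasurable hc.aestronglyMeasurable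
  have ead := iad.integral_mul_eq_mul_integral ha.aestronglyMeasurable hd.aestronglyMeasurable
  have ebc := ibc.integral_mul_eq_mul_integral hb.aestronglyMeasurable hc.aestronglyMeasurable
  have ebd := ibd.integral_mul_eq_mul_integral hb.aestronglyMeasurable hd.aestronglyMeasurable
  simp only [Pi.mul_def] at eac ead ebc ebd
  have rX := integral_re (𝕜 := ℂ) hX
  have iX := integral_im (𝕜 := ℂ) hX
  have rY := integral_re (𝕜 := ℂ) hY
  have iY := integral_im (𝕜 := ℂ) hY
  have rXY := integral_re (𝕜 := ℂ) hXY
  have iXY := integral_im (𝕜 := ℂ) hXY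
  simp only [RCLike.re_to_complex, RCLike.im_to_complex] at rX iX rY iY rXY iXY
  apply Complex.ext
  · rw [← rXY, Complex.mul_re, ← rX, ← rY, ← iX, ← iY]
    simp only [Complex.mul_re]
    rw [integral_sub hac hbd, eac, ebd]
  · rw [← iXY, Complex.mul_im, ← rX, ← rY, ← iX, ← iY]
    simp only [Complex.mul_im]
    rw [integral_add had hbc, ead, ebc]

/-- Variance is preserved by pushing a random variable forward. -/
lemma variance_id_map {Ω : Type*} [MeasurableSpace Ω] {P : Measure Ω} {ξ : Ω → ℝ}
    (hξ : Measurable ξ) : variance id (P.map ξ) = variance ξ P := by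
  unfold ProbabilityTheory.variance ProbabilityTheory.evariance
  have hm : ∫ x, id x ∂(P.map ξ) = ∫ ω, ξ ω ∂P :=
    integral_map hξ.aemeasurable aestronglyMeasurable_id
  rw [hm]
  rw [lintegral_map (by fun_prop) hξ]
  rfl

/-- Subexponential moment bound: integrability of `exp(±t·x)` gives finite second moment. -/
lemma memℒp_id_two_of_exp (μ : Measure ℝ) {t : ℝ} (ht : 0 < t)
    (h1 : Integrable (fun x => Real.exp (t * x)) μ)
    (h2 : Integrable (fun x => Real.exp (-(t * x))) μ) :
    MemLp id 2 μ := by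
  rw [memLp_two_iff_integrable_sq aestronglyMeasurable_id]
  have hbint : Integrable (fun x => (4 / t ^ 2) * (Real.exp (t * x) + Real.exp (-(t * x)))) μ :=
    (h1.add h2).const_mul _
  refine hbint.mono (by fun_prop) (Filter.Eventually.of_forall fun x => ?_)
  have h0 : x ^ 2 ≤ (4 / t ^ 2) * Real.exp (t * |x|) := by
    have e1 : t * |x| / 2 ≤ Real.exp (t * |x| / 2) :=
      le_trans (by linarith) (Real.add_one_le_exp _)
    have e2 : (t * |x| / 2) ^ 2 ≤ Real.exp (t * |x| / 2) ^ 2 := by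
      apply pow_le_pow_left₀ (by positivity) e1
    rw [← Real.exp_nat_mul] at e2
    have e3 : (t * |x| / 2) ^ 2 ≤ Real.exp (t * |x|) := by
      convert e2 using 2; push_cast; ring
    have hx2 : x ^ 2 = (4 / t ^ 2) * (t * |x| / 2) ^ 2 := by
      have : |x| ^ 2 = x ^ 2 := sq_abs x
      field_simp
      ring_nf
      nlinarith [sq_abs x, sq_nonneg t]
    rw [hx2]
    have h4 : (0:ℝ) < 4 / t ^ 2 := by positivity
    nlinarith
  have hsplit : Real.exp (t * |x|) ≤ Real.exp (t * x) + Real.exp (-(t * x)) := by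
    rcases le_or_gt 0 x with hx | hx
    · rw [abs_of_nonneg hx]
      nlinarith [Real.exp_pos (-(t * x))]
    · rw [abs_of_neg hx]
      have : t * -x = -(t * x) := by ring
      rw [this]
      nlinarith [Real.exp_pos (t * x)]
  have hnn : (0:ℝ) ≤ Real.exp (t * x) + Real.exp (-(t * x)) := by positivity
  calc ‖x ^ 2‖ = x ^ 2 := by rw [Real.norm_eq_abs, abs_of_nonneg (sq_nonneg x)]
    _ ≤ (4 / t ^ 2) * Real.exp (t * |x|) := h0
    _ ≤ (4 / t ^ 2) * (Real.exp (t * x) + Real.exp (-(t * x))) := by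
        apply mul_le_mul_of_nonneg_left hsplit (by positivity)
    _ ≤ ‖(4 / t ^ 2) * (Real.exp (t * x) + Real.exp (-(t * x)))‖ := le_abs_self _

/-- The class `A₁(τ)` is closed under convolution: if independent random variables `ξ₁, ξ₂`
have distributions in `A₁(τ)`, then the distribution of `ξ₁ + ξ₂` is in `A₁(τ)`. -/
theorem memA1_convolution
    (τ : ℝ) (hτ : 0 < τ)
    (Ω : Type) [MeasurableSpace Ω] (P : Measure Ω) [IsProbabilityMeasure P]
    (ξ₁ ξ₂ : Ω → ℝ) (h₁ : Measurable ξ₁) (h₂ : Measurable ξ₂)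
    (hindep : IndepFun ξ₁ ξ₂ P)
    (hA1 : MemA1 τ (P.map ξ₁)) (hA2 : MemA1 τ (P.map ξ₂)) :
    MemA1 τ (P.map (fun ω => ξ₁ ω + ξ₂ ω)) := by
  obtain ⟨φ₁, hφ10, H1⟩ := hA1
  obtain ⟨φ₂, hφ20, H2⟩ := hA2
  -- the second moments are finite
  have hzt : ∀ t : ℝ, |t| * τ < 1 → ‖((t : ℝ) : ℂ)‖ * τ < 1 := by
    intro t h; rwa [Complex.norm_real, Real.norm_eq_abs]
  set t₀ : ℝ := τ⁻¹ / 2 with ht₀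
  have ht₀pos : 0 < t₀ := by positivity
  have ht₀small : |t₀| * τ < 1 := by
    rw [abs_of_pos ht₀pos, ht₀, div_mul_eq_mul_div, inv_mul_cancel₀ hτ.ne']
    norm_num
  have hexp : ∀ (ξ : Ω → ℝ), Measurable ξ →
      (∀ z : ℂ, ‖z‖ * τ < 1 → Integrable (fun x : ℝ => Complex.exp (z * x)) (P.map ξ)) →
      MemLp ξ 2 P := by
    intro ξ hξ hint
    have hp : Integrable (fun x => Real.exp (t₀ * x)) (P.map ξ) := by
      have := (hint _ (hzt t₀ ht₀small)).norm
      refine this.congr (Filter.Eventually.of_forall fun x => ?_)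
      simp [Complex.norm_exp, Complex.mul_re]
    have hm : Integrable (fun x => Real.exp (-(t₀ * x))) (P.map ξ) := by
      have hneg : ‖(-((t₀ : ℝ) : ℂ))‖ * τ < 1 := by
        rw [norm_neg]; exact hzt t₀ ht₀small
      have := (hint _ hneg).norm
      refine this.congr (Filter.Eventually.of_forall fun x => ?_)
      simp [Complex.norm_exp, Complex.mul_re]
    have := memℒp_id_two_of_exp (P.map ξ) ht₀pos hp hm
    rw [memLp_map_measure_iff aestronglyMeasurable_id hξ.aemeasurable] at this
    simpa [Function.comp] using this
  have hL1 : MemLp ξ₁ 2 P := hexp ξ₁ h₁ (fun z hz => (H1 z hz).1)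
  have hL2 : MemLp ξ₂ 2 P := hexp ξ₂ h₂ (fun z hz => (H2 z hz).1)
  -- variance of the sum
  have hVar : variance id (P.map fun ω => ξ₁ ω + ξ₂ ω)
      = variance id (P.map ξ₁) + variance id (P.map ξ₂) := by
    rw [variance_id_map h₁, variance_id_map h₂, variance_id_map (ξ := fun ω => ξ₁ ω + ξ₂ ω) (h₁.add h₂)]
    exact hindep.variance_add hL1 hL2
  -- the open disc
  set s : Set ℂ := {z : ℂ | ‖z‖ * τ < 1} with hs
  have hsOpen : IsOpen s := isOpen_lt (continuous_norm.mul continuous_const) continuous_const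
  have hAn1 : AnalyticOnNhd ℂ φ₁ s := fun w hw => (H1 w hw).2.2.1
  have hAn2 : AnalyticOnNhd ℂ φ₂ s := fun w hw => (H2 w hw).2.2.1
  refine ⟨φ₁ + φ₂, by simp [hφ10, hφ20], fun z hz => ?_⟩
  obtain ⟨hInt1, hEq1, hA1z, hD1⟩ := H1 z hz
  obtain ⟨hInt2, hEq2, hA2z, hD2⟩ := H2 z hz
  -- transfer integrability
  have hcont : Continuous (fun x : ℝ => Complex.exp (z * x)) :=
    Complex.continuous_exp.comp (continuous_const.mul Complex.continuous_ofReal)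
  have hi1 : Integrable (fun ω => Complex.exp (z * ξ₁ ω)) P := by
    have := (integrable_map_measure hcont.aestronglyMeasurable h₁.aemeasurable).1 hInt1
    exact this
  have hi2 : Integrable (fun ω => Complex.exp (z * ξ₂ ω)) P := by
    have := (integrable_map_measure hcont.aestronglyMeasurable h₂.aemeasurable).1 hInt2
    exact this
  have hmexp : Measurable (fun x : ℝ => Complex.exp (z * x)) := hcont.measurable
  have hie : IndepFun (fun ω => Complex.exp (z * ξ₁ ω)) (fun ω => Complex.exp (z * ξ₂ ω)) P :=
    hindep.comp hmexp hmexp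
  have hiprod : Integrable (fun ω => Complex.exp (z * ξ₁ ω) * Complex.exp (z * ξ₂ ω)) P :=
    hie.integrable_mul hi1 hi2
  have hkey : ∀ ω : Ω, Complex.exp (z * ξ₁ ω) * Complex.exp (z * ξ₂ ω)
      = (fun x : ℝ => Complex.exp (z * x)) (ξ₁ ω + ξ₂ ω) := by
    intro ω
    show _ = Complex.exp (z * ((ξ₁ ω + ξ₂ ω : ℝ) : ℂ))
    rw [Complex.ofReal_add, mul_add, Complex.exp_add]
  have hisum : Integrable ((fun x : ℝ => Complex.exp (z * x)) ∘ fun ω => ξ₁ ω + ξ₂ ω) P :=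
    hiprod.congr (Filter.Eventually.of_forall fun ω => hkey ω)
  refine ⟨?_, ?_, hA1z.add hA2z, ?_⟩
  · rw [integrable_map_measure (f := fun ω => ξ₁ ω + ξ₂ ω) hcont.aestronglyMeasurable (h₁.add h₂).aemeasurable]
    simpa [Function.comp] using hisum
  · have hmap : ∫ x : ℝ, Complex.exp (z * x) ∂(P.map fun ω => ξ₁ ω + ξ₂ ω)
        = ∫ ω, (fun x : ℝ => Complex.exp (z * x)) (ξ₁ ω + ξ₂ ω) ∂P :=
      integral_map (h₁.add h₂).aemeasurable hcont.aestronglyMeasurable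
    have hmap1 : ∫ x : ℝ, Complex.exp (z * x) ∂(P.map ξ₁)
        = ∫ ω, Complex.exp (z * ξ₁ ω) ∂P :=
      integral_map h₁.aemeasurable hcont.aestronglyMeasurable
    have hmap2 : ∫ x : ℝ, Complex.exp (z * x) ∂(P.map ξ₂)
        = ∫ ω, Complex.exp (z * ξ₂ ω) ∂P :=
      integral_map h₂.aemeasurable hcont.aestronglyMeasurable
    rw [hmap]
    calc Complex.exp ((φ₁ + φ₂) z) = Complex.exp (φ₁ z) * Complex.exp (φ₂ z) := by
          rw [← Complex.exp_add]; rfl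
      _ = (∫ ω, Complex.exp (z * ξ₁ ω) ∂P) * ∫ ω, Complex.exp (z * ξ₂ ω) ∂P := by
          rw [hEq1, hEq2, hmap1, hmap2]
      _ = ∫ ω, Complex.exp (z * ξ₁ ω) * Complex.exp (z * ξ₂ ω) ∂P :=
          (hie.integral_complex_mul hi1 hi2).symm
      _ = ∫ ω, (fun x : ℝ => Complex.exp (z * x)) (ξ₁ ω + ξ₂ ω) ∂P :=
          integral_congr_ae (Filter.Eventually.of_forall fun ω => hkey ω)
  · rw [iteratedDeriv_add_of_analyticOnNhd hsOpen hz hAn1 hAn2, hVar, mul_add]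
    calc ‖iteratedDeriv 3 φ₁ z + iteratedDeriv 3 φ₂ z‖
        ≤ ‖iteratedDeriv 3 φ₁ z‖ + ‖iteratedDeriv 3 φ₂ z‖ := norm_add_le _ _
      _ ≤ τ * variance id (P.map ξ₁) + τ * variance id (P.map ξ₂) := add_le_add hD1 hD2
end
end
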